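/- arXiv:0807.2810 — 8 statements merged into one kernel-verified Lean document; each statement's English description precedes it below -/
import Mathlib

section
/- For every bounded sequence (x_n) in a real Banach space X, δ(x_n) ≥ 2 ε_J(x_n), where δ(x_n) = sup_{x* in the closed unit ball of X*} (limsup x*(x_n) − liminf x*(x_n)) and ε_J is the James constant. -/
open Filter Topology

variable {X : Type*} [NormedAddCommGroup X] [NormedSpace ℝ X]

/-- James constant of a bounded sequence. -/
noncomputable def epsJ (x : ℕ → X) : ℝ :=
  ⨆ m : ℕ, sInf {r : ℝ | ∃ α : ℕ →₀ ℝ, (∀ n < m, α n = 0) ∧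
    (∑ n ∈ α.support, |α n|) = 1 ∧ r = ‖∑ n ∈ α.support, α n • x n‖}

/-- Oscillation modulus with respect to a set of functionals. -/
noncomputable def deltaD (D : Set (X →L[ℝ] ℝ)) (x : ℕ → X) : ℝ :=
  sSup {r : ℝ | ∃ f ∈ D, r = Filter.limsup (fun n => f (x n)) Filter.atTop
    - Filter.liminf (fun n => f (x n)) Filter.atTop}

/-- Oscillation modulus with respect to the dual unit ball. -/
noncomputable def delta (x : ℕ → X) : ℝ := deltaD {f : X →L[ℝ] ℝ | ‖f‖ ≤ 1} x

/-- Hagler-Johnson modulus. -/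
noncomputable def deltaHJ (x : ℕ → X) : ℝ :=
  sSup {r : ℝ | ∃ f : X →L[ℝ] ℝ, ‖f‖ ≤ 1 ∧
    r = Filter.limsup (fun n => f (x n)) Filter.atTop}

/-- Sup of James constants over subsequences. -/
noncomputable def tildeEpsJ (x : ℕ → X) : ℝ :=
  sSup {r : ℝ | ∃ φ : ℕ → ℕ, StrictMono φ ∧ r = epsJ (x ∘ φ)}

/-- Inf of δ over subsequences. -/
noncomputable def tildeDelta (x : ℕ → X) : ℝ :=
  sInf {r : ℝ | ∃ φ : ℕ → ℕ, StrictMono φ ∧ r = delta (x ∘ φ)}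

/-- `B` is a boundary: a subset of the dual unit sphere on which every element
of `X` attains its norm. -/
def IsBoundary (B : Set (X →L[ℝ] ℝ)) : Prop :=
  (∀ b ∈ B, ‖b‖ = 1) ∧ ∀ x : X, ∃ b ∈ B, b x = ‖x‖

/-- `x` is equivalent to the canonical `ℓ¹` basis (lower estimate; the upper
estimate follows from boundedness). -/
def IsL1Seq (x : ℕ → X) : Prop :=
  ∃ c > (0:ℝ), ∀ α : ℕ →₀ ℝ,
    c * (∑ n ∈ α.support, |α n|) ≤ ‖∑ n ∈ α.support, α n • x n‖

/-- norm-bounded sequence -/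
def BoundedSeq (x : ℕ → X) : Prop := ∃ C : ℝ, ∀ n, ‖x n‖ ≤ C

/-- weakly Cauchy sequence -/
def WeaklyCauchy (x : ℕ → X) : Prop :=
  ∀ f : X →L[ℝ] ℝ, ∃ l : ℝ, Filter.Tendsto (fun n => f (x n)) Filter.atTop (nhds l)

/-- the topology `σ(X,B)` of pointwise convergence on `B` -/
def Btop (B : Set (X →L[ℝ] ℝ)) : TopologicalSpace X :=
  TopologicalSpace.induced (fun x : X => fun b : B => (b : X →L[ℝ] ℝ) x) Pi.topologicalSpace

/-- the weak topology `σ(X,X*)` -/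
noncomputable def weakTop (X : Type*) [NormedAddCommGroup X] [NormedSpace ℝ X] :
    TopologicalSpace X :=
  TopologicalSpace.induced (fun x : X => fun f : X →L[ℝ] ℝ => f x) Pi.topologicalSpace


private lemma sum_ext' {M : Type*} [AddCommMonoid M] (α : ℕ →₀ ℝ) {s : Finset ℕ}
    (h : α.support ⊆ s) (g : ℕ → ℝ → M) (hg : ∀ n, g n 0 = 0) :
    ∑ n ∈ α.support, g n (α n) = ∑ n ∈ s, g n (α n) :=
  Finset.sum_subset h (fun n _ hn => by rw [Finsupp.notMem_support_iff.mp hn, hg])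

/-- The set of "alternating-sign" combinations of the tail of `x`. -/
private def Tset (x : ℕ → X) (m : ℕ) : Set X :=
  {w | ∃ α : ℕ →₀ ℝ, (∀ n < m, α n = 0) ∧ (∀ n, Even n → 0 ≤ α n) ∧
    (∀ n, ¬ Even n → α n ≤ 0) ∧ (∑ n ∈ α.support, |α n|) = 1 ∧
    w = ∑ n ∈ α.support, α n • x n}

private lemma Tset_convex (x : ℕ → X) (m : ℕ) : Convex ℝ (Tset x m) := by
  rintro u ⟨α, hα0, hαe, hαo, hα1, rfl⟩ v ⟨β, hβ0, hβe, hβo, hβ1, rfl⟩ a b ha hb hab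
  refine ⟨a • α + b • β, ?_, ?_, ?_, ?_, ?_⟩
  · intro n hn
    simp [hα0 n hn, hβ0 n hn]
  · intro n hn
    have := hαe n hn; have := hβe n hn
    simp only [Finsupp.add_apply, Finsupp.smul_apply, smul_eq_mul]
    positivity
  · intro n hn
    have h1 := hαo n hn; have h2 := hβo n hn
    simp only [Finsupp.add_apply, Finsupp.smul_apply, smul_eq_mul]
    have : a * α n ≤ 0 := mul_nonpos_of_nonneg_of_nonpos ha h1
    have : b * β n ≤ 0 := mul_nonpos_of_nonneg_of_nonpos hb h2
    linarith
  · -- sum of absolute values is 1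
    set γ : ℕ →₀ ℝ := a • α + b • β with hγ
    have hsupp : γ.support ⊆ α.support ∪ β.support := by
      refine Finsupp.support_add.trans ?_
      exact Finset.union_subset_union (Finsupp.support_smul) (Finsupp.support_smul)
    have key : ∀ n, |γ n| = a * |α n| + b * |β n| := by
      intro n
      have hγn : γ n = a * α n + b * β n := by simp [hγ]
      rcases Nat.even_or_odd n with he | ho
      · have h1 := hαe n he; have h2 := hβe n he
        rw [hγn, abs_of_nonneg (by positivity), abs_of_nonneg h1, abs_of_nonneg h2]
      · have hne : ¬ Even n := Nat.not_even_iff_odd.mpr ho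
        have h1 := hαo n hne; have h2 := hβo n hne
        have : a * α n ≤ 0 := mul_nonpos_of_nonneg_of_nonpos ha h1
        have : b * β n ≤ 0 := mul_nonpos_of_nonneg_of_nonpos hb h2
        rw [hγn, abs_of_nonpos (by linarith), abs_of_nonpos h1, abs_of_nonpos h2]
        ring
    calc ∑ n ∈ γ.support, |γ n| = ∑ n ∈ α.support ∪ β.support, |γ n| :=
          sum_ext' γ hsupp (fun _ v => |v|) (fun _ => abs_zero)
      _ = ∑ n ∈ α.support ∪ β.support, (a * |α n| + b * |β n|) := by
          exact Finset.sum_congr rfl (fun n _ => key n)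
      _ = a * ∑ n ∈ α.support ∪ β.support, |α n| + b * ∑ n ∈ α.support ∪ β.support, |β n| := by
          rw [Finset.sum_add_distrib, Finset.mul_sum, Finset.mul_sum]
      _ = a * ∑ n ∈ α.support, |α n| + b * ∑ n ∈ β.support, |β n| := by
          rw [← sum_ext' α Finset.subset_union_left (fun _ v => |v|) (fun _ => abs_zero),
            ← sum_ext' β Finset.subset_union_right (fun _ v => |v|) (fun _ => abs_zero)]
      _ = 1 := by rw [hα1, hβ1]; linarith
  · -- the combination
    set γ : ℕ →₀ ℝ := a • α + b • β with hγ
    have hsupp : γ.support ⊆ α.support ∪ β.support := by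
      refine Finsupp.support_add.trans ?_
      exact Finset.union_subset_union (Finsupp.support_smul) (Finsupp.support_smul)
    calc a • ∑ n ∈ α.support, α n • x n + b • ∑ n ∈ β.support, β n • x n
        = a • ∑ n ∈ α.support ∪ β.support, α n • x n
          + b • ∑ n ∈ α.support ∪ β.support, β n • x n := by
          rw [← sum_ext' α Finset.subset_union_left (fun n v => v • x n) (fun _ => zero_smul ℝ _),
            ← sum_ext' β Finset.subset_union_right (fun n v => v • x n) (fun _ => zero_smul ℝ _)]
      _ = ∑ n ∈ α.support ∪ β.support, γ n • x n := by
          rw [Finset.smul_sum, Finset.smul_sum, ← Finset.sum_add_distrib]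
          refine Finset.sum_congr rfl (fun n _ => ?_)
          simp [hγ, add_smul, mul_smul]
      _ = ∑ n ∈ γ.support, γ n • x n :=
          (sum_ext' γ hsupp (fun n v => v • x n) (fun _ => zero_smul ℝ _)).symm

private lemma pair_mem_Tset (x : ℕ → X) (m p q : ℕ) (hp : Even p) (hq : ¬ Even q)
    (hmp : m ≤ p) (hmq : m ≤ q) :
    (2⁻¹ : ℝ) • (x p - x q) ∈ Tset x m := by
  have hpq : p ≠ q := fun h => hq (h ▸ hp)
  set α : ℕ →₀ ℝ := Finsupp.single p (2⁻¹ : ℝ) + Finsupp.single q (-(2⁻¹ : ℝ)) with hα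
  have happ : α p = 2⁻¹ ∧ α q = -(2⁻¹) ∧ ∀ n, n ≠ p → n ≠ q → α n = 0 := by
    refine ⟨?_, ?_, ?_⟩
    · simp [hα, Finsupp.single_apply, hpq, hpq.symm]
    · simp [hα, Finsupp.single_apply, hpq, hpq.symm]
    · intro n h1 h2; simp [hα, Finsupp.single_apply, Ne.symm h1, Ne.symm h2]
  obtain ⟨hap, haq, haz⟩ := happ
  have hsupp : α.support ⊆ {p, q} := by
    refine Finsupp.support_add.trans ?_
    intro n hn
    simp only [Finset.mem_union] at hn
    rcases hn with h | h
    · exact Finset.mem_insert.mpr (Or.inl (Finset.mem_singleton.mp (Finsupp.support_single_subset h)))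
    · exact Finset.mem_insert.mpr (Or.inr (Finsupp.support_single_subset h))
  refine ⟨α, ?_, ?_, ?_, ?_, ?_⟩
  · intro n hn
    exact haz n (fun h => by omega) (fun h => by omega)
  · intro n hn
    rcases eq_or_ne n p with rfl | h1
    · rw [hap]; norm_num
    rcases eq_or_ne n q with rfl | h2
    · exact absurd hn hq
    · rw [haz n h1 h2]
  · intro n hn
    rcases eq_or_ne n p with rfl | h1
    · exact absurd hp hn
    rcases eq_or_ne n q with rfl | h2
    · rw [haq]; norm_num
    · rw [haz n h1 h2]
  · rw [sum_ext' α hsupp (fun _ v => |v|) (fun _ => abs_zero),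
      Finset.sum_pair hpq, hap, haq, abs_neg, abs_of_nonneg (by norm_num : (0:ℝ) ≤ 2⁻¹)]
    norm_num
  · rw [sum_ext' α hsupp (fun n v => v • x n) (fun _ => zero_smul ℝ _),
      Finset.sum_pair hpq, hap, haq, smul_sub]
    module

private theorem key_ineq [CompleteSpace X] (x : ℕ → X) (C : ℝ) (hC : ∀ n, ‖x n‖ ≤ C)
    (S : Set ℝ) (hS : S = {r : ℝ | ∃ f ∈ {f : X →L[ℝ] ℝ | ‖f‖ ≤ 1},
      r = limsup (fun n => f (x n)) atTop - liminf (fun n => f (x n)) atTop})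
    (hSbdd : BddAbove S) (hdelta0 : (0:ℝ) ≤ sSup S) (m : ℕ) :
    sInf {r : ℝ | ∃ α : ℕ →₀ ℝ, (∀ n < m, α n = 0) ∧
      (∑ n ∈ α.support, |α n|) = 1 ∧ r = ‖∑ n ∈ α.support, α n • x n‖} ≤ sSup S / 2 := by
  set d := sInf {r : ℝ | ∃ α : ℕ →₀ ℝ, (∀ n < m, α n = 0) ∧
      (∑ n ∈ α.support, |α n|) = 1 ∧ r = ‖∑ n ∈ α.support, α n • x n‖} with hd
  rcases le_or_gt d 0 with hd0 | hd0
  · linarith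
  have hTnorm : ∀ w ∈ Tset x m, d ≤ ‖w‖ := by
    rintro w ⟨α, h0, he, ho, h1, rfl⟩
    refine csInf_le ⟨0, ?_⟩ ⟨α, h0, h1, rfl⟩
    rintro r ⟨β, -, -, rfl⟩
    exact norm_nonneg _
  have hdisj : Disjoint (Metric.ball (0:X) d) (Tset x m) := by
    rw [Set.disjoint_left]
    intro w hw hwT
    have := hTnorm w hwT
    rw [Metric.mem_ball, dist_zero_right] at hw
    linarith
  obtain ⟨f, c, hfc1, hfc2⟩ := geometric_hahn_banach_open (convex_ball 0 d) Metric.isOpen_ball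
    (Tset_convex x m) hdisj
  have hw0 : (2⁻¹:ℝ) • (x (2*m) - x (2*m+1)) ∈ Tset x m :=
    pair_mem_Tset x m (2*m) (2*m+1) ⟨m, two_mul m⟩
      (by simp [Nat.even_add_one]) (by omega) (by omega)
  have hc_pos : 0 < c := by
    have h := hfc1 0 (by simpa [Metric.mem_ball] using hd0)
    simpa using h
  have hfw0 := hfc2 _ hw0
  have hf_ne : f ≠ 0 := by
    intro h; rw [h] at hfw0; simp at hfw0; linarith
  have hfpos : 0 < ‖f‖ := norm_pos_iff.mpr hf_ne
  have hkey : ∀ y : X, |f y| * d ≤ c * ‖y‖ := by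
    intro y
    have h2 : ∀ ε : ℝ, 0 < ε → |f y| * d ≤ c * (‖y‖ + ε) := by
      intro ε hε
      set a : X := (d / (‖y‖ + ε)) • y with haa
      have hpos : (0:ℝ) < ‖y‖ + ε := by positivity
      have hya : ‖a‖ < d := by
        rw [haa, norm_smul, Real.norm_eq_abs, abs_of_nonneg (by positivity),
          div_mul_eq_mul_div, div_lt_iff₀ hpos]
        nlinarith [norm_nonneg y]
      have hyn : ‖-a‖ < d := by rwa [norm_neg]
      have h3 : |f a| ≤ c := by
        have hp := hfc1 a (by simpa [Metric.mem_ball] using hya)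
        have hn := hfc1 (-a) (by simpa [Metric.mem_ball] using hyn)
        rw [map_neg] at hn
        exact le_of_lt (abs_lt.mpr ⟨by linarith, hp⟩)
      have h4 : f a = (d / (‖y‖ + ε)) * f y := by
        rw [haa, map_smul]; rfl
      rw [h4, abs_mul, abs_of_nonneg (by positivity), div_mul_eq_mul_div,
        div_le_iff₀ hpos] at h3
      nlinarith [abs_nonneg (f y)]
    refine le_of_forall_pos_le_add (fun ε hε => ?_)
    calc |f y| * d ≤ c * (‖y‖ + ε / c) := h2 (ε / c) (by positivity)
      _ = c * ‖y‖ + ε := by field_simp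
  have hnorm_le : ‖f‖ * d ≤ c := by
    have hb : ‖f‖ ≤ c / d := by
      refine ContinuousLinearMap.opNorm_le_bound f (by positivity) (fun y => ?_)
      rw [Real.norm_eq_abs, div_mul_eq_mul_div, le_div_iff₀ hd0]
      linarith [hkey y]
    calc ‖f‖ * d ≤ (c / d) * d := mul_le_mul_of_nonneg_right hb hd0.le
      _ = c := div_mul_cancel₀ c hd0.ne'
  set g : X →L[ℝ] ℝ := ‖f‖⁻¹ • f with hg
  have hg1 : ‖g‖ ≤ 1 := by
    calc ‖g‖ ≤ ‖(‖f‖⁻¹)‖ * ‖f‖ := ContinuousLinearMap.opNorm_smul_le _ _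
      _ = 1 := by
        rw [Real.norm_eq_abs, abs_of_nonneg (inv_nonneg.mpr hfpos.le), inv_mul_cancel₀ hfpos.ne']
  have hgT : ∀ w ∈ Tset x m, d ≤ g w := by
    intro w hw
    have h1 : c ≤ f w := hfc2 w hw
    have h2 : g w = ‖f‖⁻¹ * f w := rfl
    rw [h2]
    calc d = ‖f‖⁻¹ * (‖f‖ * d) := by field_simp
      _ ≤ ‖f‖⁻¹ * c := mul_le_mul_of_nonneg_left hnorm_le (inv_nonneg.mpr hfpos.le)
      _ ≤ ‖f‖⁻¹ * f w := mul_le_mul_of_nonneg_left h1 (inv_nonneg.mpr hfpos.le)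
  have hpair : ∀ p q, Even p → ¬Even q → m ≤ p → m ≤ q →
      g (x q) + 2 * d ≤ g (x p) := by
    intro p q hp hq hmp hmq
    have h1 := hgT _ (pair_mem_Tset x m p q hp hq hmp hmq)
    have h2 : g ((2⁻¹:ℝ) • (x p - x q)) = 2⁻¹ * (g (x p) - g (x q)) := by
      rw [map_smul, map_sub]; rfl
    rw [h2] at h1; linarith
  set u : ℕ → ℝ := fun n => g (x n) with hu
  have hub : ∀ n, |u n| ≤ C := by
    intro n
    calc |u n| ≤ ‖g‖ * ‖x n‖ := g.le_opNorm _
      _ ≤ 1 * C := mul_le_mul hg1 (hC n) (norm_nonneg _) zero_le_one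
      _ = C := one_mul C
  have hbdd_le : IsBoundedUnder (· ≤ ·) atTop u :=
    isBoundedUnder_of ⟨C, fun n => (abs_le.mp (hub n)).2⟩
  have hbdd_ge : IsBoundedUnder (· ≥ ·) atTop u :=
    isBoundedUnder_of ⟨-C, fun n => (abs_le.mp (hub n)).1⟩
  set A : ℝ := limsup (fun j => u (2*j+1)) atTop with hA
  have hbddo_le : IsBoundedUnder (· ≤ ·) atTop (fun j => u (2*j+1)) :=
    isBoundedUnder_of ⟨C, fun j => (abs_le.mp (hub _)).2⟩
  have hA_le : ∀ p, Even p → m ≤ p → A ≤ u p - 2*d := by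
    intro p hp hmp
    refine limsup_le_of_le (isCoboundedUnder_le_of_le atTop (fun j => (abs_le.mp (hub _)).1)) ?_
    filter_upwards [eventually_ge_atTop m] with j hj
    have hq : ¬ Even (2*j+1) := by simp [Nat.even_add_one]
    have := hpair p (2*j+1) hp hq hmp (by omega)
    linarith
  have hup : 2*d + A ≤ limsup u atTop := by
    refine le_limsup_of_frequently_le ?_ hbdd_le
    rw [frequently_atTop]
    intro N
    refine ⟨2 * max m N, by omega, ?_⟩
    have := hA_le (2 * max m N) ⟨max m N, two_mul _⟩ (by omega)
    linarith
  have hdown : liminf u atTop ≤ A := by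
    refine le_of_forall_pos_le_add (fun ε hε => ?_)
    have hev : ∀ᶠ j in atTop, u (2*j+1) < A + ε :=
      eventually_lt_of_limsup_lt (by linarith) hbddo_le
    refine liminf_le_of_frequently_le ?_ hbdd_ge
    rw [eventually_atTop] at hev
    obtain ⟨J, hJ⟩ := hev
    rw [frequently_atTop]
    intro N
    exact ⟨2 * max J N + 1, by omega, le_of_lt (hJ (max J N) (le_max_left _ _))⟩
  have hmem : limsup u atTop - liminf u atTop ∈ S := by
    rw [hS]; exact ⟨g, hg1, rfl⟩
  have hfin : limsup u atTop - liminf u atTop ≤ sSup S := le_csSup hSbdd hmem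
  linarith

theorem stmt1' [CompleteSpace X] (x : ℕ → X) (hx : ∃ C : ℝ, ∀ n, ‖x n‖ ≤ C) :
    2 * (⨆ m : ℕ, sInf {r : ℝ | ∃ α : ℕ →₀ ℝ, (∀ n < m, α n = 0) ∧
      (∑ n ∈ α.support, |α n|) = 1 ∧ r = ‖∑ n ∈ α.support, α n • x n‖}) ≤
    sSup {r : ℝ | ∃ f ∈ {f : X →L[ℝ] ℝ | ‖f‖ ≤ 1},
      r = limsup (fun n => f (x n)) atTop - liminf (fun n => f (x n)) atTop} := by
  obtain ⟨C, hC⟩ := hx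
  set S : Set ℝ := {r : ℝ | ∃ f ∈ {f : X →L[ℝ] ℝ | ‖f‖ ≤ 1},
      r = limsup (fun n => f (x n)) atTop - liminf (fun n => f (x n)) atTop} with hS
  have hSbdd : BddAbove S := by
    refine ⟨2*C, ?_⟩
    rintro r ⟨f, hf, rfl⟩
    have hb : ∀ n, |f (x n)| ≤ C := by
      intro n
      calc |f (x n)| ≤ ‖f‖ * ‖x n‖ := f.le_opNorm _
        _ ≤ 1 * C := mul_le_mul hf (hC n) (norm_nonneg _) zero_le_one
        _ = C := one_mul C
    have h1 : limsup (fun n => f (x n)) atTop ≤ C :=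
      limsup_le_of_le (isCoboundedUnder_le_of_le atTop (fun n => (abs_le.mp (hb n)).1))
        (Eventually.of_forall (fun n => (abs_le.mp (hb n)).2))
    have h2 : -C ≤ liminf (fun n => f (x n)) atTop :=
      le_liminf_of_le (isCoboundedUnder_ge_of_le atTop (fun n => (abs_le.mp (hb n)).2))
        (Eventually.of_forall (fun n => (abs_le.mp (hb n)).1))
    linarith
  have hS0 : (0:ℝ) ∈ S := by
    rw [hS]
    refine ⟨0, by simp, ?_⟩
    have h : (fun n => (0 : X →L[ℝ] ℝ) (x n)) = fun _ => (0:ℝ) := by ext n; simp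
    rw [h, limsup_const, liminf_const, sub_zero]
  have hdelta0 : (0:ℝ) ≤ sSup S := le_csSup hSbdd hS0
  have key := fun m => key_ineq x C hC S hS hSbdd hdelta0 m
  have heps := Real.iSup_le key (by linarith)
  linarith

theorem stmt1 [CompleteSpace X] (x : ℕ → X) (hx : BoundedSeq x) :
    2 * epsJ x ≤ delta x :=
  stmt1' x hx
end

section
/- For every bounded sequence (x_n) in a real Banach space X, δ_HJ(x_n) ≥ ε_J(x_n), where δ_HJ(x_n) = sup_{x* in the closed unit ball of X*} limsup_n x*(x_n). -/
open Filter Topology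

variable {X : Type*} [NormedAddCommGroup X] [NormedSpace ℝ X]

lemma finsupp_sum_eq {x : ℕ → X} (α : ℕ →₀ ℝ) :
    Finsupp.linearCombination ℝ x α = ∑ n ∈ α.support, α n • x n := by
  rw [Finsupp.linearCombination_apply, Finsupp.sum]

/-- finsupps vanishing below `m` -/
noncomputable def Wsub (m : ℕ) : Submodule ℝ (ℕ →₀ ℝ) where
  carrier := {α | ∀ n < m, α n = 0}
  add_mem' := by intro a b ha hb n hn; simp [ha n hn, hb n hn]
  zero_mem' := by intro n hn; simp
  smul_mem' := by intro r a ha n hn; simp [ha n hn]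

noncomputable def Tmap (x : ℕ → X) (m : ℕ) : Wsub m →ₗ[ℝ] X :=
  (Finsupp.linearCombination ℝ x).comp (Wsub m).subtype

noncomputable def smap (m : ℕ) : Wsub m →ₗ[ℝ] ℝ :=
  (Finsupp.linearCombination ℝ (fun _ : ℕ => (1:ℝ))).comp (Wsub m).subtype

set_option maxHeartbeats 1000000 in
lemma exists_functional [CompleteSpace X] {x : ℕ → X} {m : ℕ} {c : ℝ} (hc0 : 0 < c)
    (hkey : ∀ α : ℕ →₀ ℝ, (∀ n < m, α n = 0) →
      c * (∑ n ∈ α.support, |α n|) ≤ ‖∑ n ∈ α.support, α n • x n‖) :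
    ∃ F : X →L[ℝ] ℝ, ‖F‖ ≤ 1 ∧ ∀ n, m ≤ n → F (x n) = c := by
  have hT'app : ∀ α : Wsub m,
      Tmap x m α = ∑ n ∈ (α : ℕ →₀ ℝ).support, (α : ℕ →₀ ℝ) n • x n := by
    intro α; simp [Tmap, finsupp_sum_eq]
  have hs'app : ∀ α : Wsub m,
      smap m α = ∑ n ∈ (α : ℕ →₀ ℝ).support, (α : ℕ →₀ ℝ) n := by
    intro α
    simp [smap, Finsupp.linearCombination_apply, Finsupp.sum]
  have hs'bound : ∀ α : Wsub m, c * |smap m α| ≤ ‖Tmap x m α‖ := by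
    intro α
    have h1 : |smap m α| ≤ ∑ n ∈ (α : ℕ →₀ ℝ).support, |(α : ℕ →₀ ℝ) n| := by
      rw [hs'app]; exact Finset.abs_sum_le_sum_abs _ _
    calc c * |smap m α|
        ≤ c * ∑ n ∈ (α : ℕ →₀ ℝ).support, |(α : ℕ →₀ ℝ) n| :=
          mul_le_mul_of_nonneg_left h1 hc0.le
      _ ≤ ‖∑ n ∈ (α : ℕ →₀ ℝ).support, (α : ℕ →₀ ℝ) n • x n‖ := hkey _ α.2
      _ = ‖Tmap x m α‖ := by rw [hT'app]
  have hker : LinearMap.ker (Tmap x m) ≤ LinearMap.ker (smap m) := by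
    intro α hα
    have hT0 : Tmap x m α = 0 := hα
    have hb := hs'bound α
    rw [hT0, norm_zero] at hb
    have habs : |smap m α| ≤ 0 := by nlinarith [abs_nonneg (smap m α)]
    show smap m α = 0
    exact abs_eq_zero.1 (le_antisymm habs (abs_nonneg _))
  -- well-definedness
  have hwd : ∀ a b : Wsub m, Tmap x m a = Tmap x m b → smap m a = smap m b := by
    intro a b hab
    have hab' : a + (-1 : ℝ) • b ∈ LinearMap.ker (Tmap x m) := by
      rw [LinearMap.mem_ker, (Tmap x m).map_add, (Tmap x m).map_smul, hab]
      simp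
    have h0 : smap m (a + (-1 : ℝ) • b) = 0 := hker hab'
    rw [(smap m).map_add, (smap m).map_smul, smul_eq_mul] at h0
    linarith
  have hch : ∀ v : ↥(LinearMap.range (Tmap x m)),
      Tmap x m (Classical.choose v.2) = (v : X) :=
    fun v => Classical.choose_spec v.2
  set g : ↥(LinearMap.range (Tmap x m)) →ₗ[ℝ] ℝ :=
    { toFun := fun v => smap m (Classical.choose v.2)
      map_add' := by
        intro v w
        have h1 : Tmap x m (Classical.choose (v + w).2)
            = Tmap x m (Classical.choose v.2 + Classical.choose w.2) := by
          rw [(Tmap x m).map_add, hch v, hch w, hch (v + w)]; rfl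
        show smap m (Classical.choose (v + w).2)
          = smap m (Classical.choose v.2) + smap m (Classical.choose w.2)
        rw [hwd _ _ h1, (smap m).map_add]
      map_smul' := by
        intro r v
        have h1 : Tmap x m (Classical.choose (r • v).2)
            = Tmap x m (r • Classical.choose v.2) := by
          rw [(Tmap x m).map_smul, hch v, hch (r • v)]; rfl
        show smap m (Classical.choose (r • v).2)
          = r • smap m (Classical.choose v.2)
        rw [hwd _ _ h1, (smap m).map_smul] } with hg
  have hgval : ∀ (α : Wsub m) (h : Tmap x m α ∈ LinearMap.range (Tmap x m)),
      g ⟨Tmap x m α, h⟩ = smap m α := by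
    intro α h
    refine hwd _ _ ?_
    exact hch ⟨Tmap x m α, h⟩
  have hbound : ∀ v : ↥(LinearMap.range (Tmap x m)), ‖(c • g) v‖ ≤ 1 * ‖v‖ := by
    intro v
    obtain ⟨α, hα⟩ := v.2
    have hv : v = ⟨Tmap x m α, LinearMap.mem_range_self _ α⟩ := Subtype.ext hα.symm
    rw [hv]
    simp only [LinearMap.smul_apply, smul_eq_mul, Real.norm_eq_abs, one_mul]
    rw [hgval α]
    have hnv : ‖(⟨Tmap x m α, LinearMap.mem_range_self _ α⟩ :
        ↥(LinearMap.range (Tmap x m)))‖ = ‖Tmap x m α‖ := rfl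
    rw [hnv, abs_mul, abs_of_pos hc0]
    exact hs'bound α
  set f₀ : ↥(LinearMap.range (Tmap x m)) →L[ℝ] ℝ :=
    LinearMap.mkContinuous (c • g) 1 hbound with hf₀
  have hf₀n : ‖f₀‖ ≤ 1 := LinearMap.mkContinuous_norm_le _ zero_le_one _
  obtain ⟨F, hFe, hFn⟩ := exists_extension_norm_eq (LinearMap.range (Tmap x m)) f₀
  refine ⟨F, by rw [hFn]; exact hf₀n, ?_⟩
  intro n hn
  set α : ℕ →₀ ℝ := Finsupp.single n 1 with hα
  have hαW : α ∈ Wsub m := by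
    intro k hk
    exact Finsupp.single_eq_of_ne (ne_of_lt (lt_of_lt_of_le hk hn))
  have hTα : Tmap x m ⟨α, hαW⟩ = x n := by
    simp [Tmap, hα, Finsupp.linearCombination_single]
  have hsα : smap m ⟨α, hαW⟩ = 1 := by
    simp [smap, hα, Finsupp.linearCombination_single]
  have hmem : x n ∈ LinearMap.range (Tmap x m) := ⟨⟨α, hαW⟩, hTα⟩
  rw [hFe ⟨x n, hmem⟩]
  have hv : (⟨x n, hmem⟩ : ↥(LinearMap.range (Tmap x m)))
      = ⟨Tmap x m ⟨α, hαW⟩, LinearMap.mem_range_self _ _⟩ := Subtype.ext hTα.symm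
  rw [hf₀]
  simp only [LinearMap.mkContinuous_apply]
  rw [hv]
  simp only [LinearMap.smul_apply, smul_eq_mul]
  rw [hgval, hsα, mul_one]

theorem stmt2 [CompleteSpace X] (x : ℕ → X) (hx : BoundedSeq x) :
    epsJ x ≤ deltaHJ x := by
  obtain ⟨C, hC⟩ := hx
  have hC0 : (0:ℝ) ≤ C := le_trans (norm_nonneg (x 0)) (hC 0)
  set SHJ := {r : ℝ | ∃ f : X →L[ℝ] ℝ, ‖f‖ ≤ 1 ∧
    r = Filter.limsup (fun n => f (x n)) Filter.atTop} with hSHJ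
  have hbdd : BddAbove SHJ := by
    refine ⟨C, ?_⟩
    rintro r ⟨f, hf1, rfl⟩
    have habs : ∀ n, |f (x n)| ≤ C := by
      intro n
      calc |f (x n)| ≤ ‖f‖ * ‖x n‖ := f.le_opNorm (x n)
        _ ≤ 1 * C := by
            exact mul_le_mul hf1 (hC n) (norm_nonneg _) zero_le_one
        _ = C := one_mul C
    refine Filter.limsup_le_of_le ?_ (Filter.Eventually.of_forall fun n => (abs_le.1 (habs n)).2)
    exact Filter.isCoboundedUnder_le_of_le Filter.atTop (fun n => (abs_le.1 (habs n)).1)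
  have hzero : (0:ℝ) ∈ SHJ := by
    refine ⟨0, by simp, ?_⟩
    simp [Filter.limsup_const]
  have h0 : (0:ℝ) ≤ deltaHJ x := le_csSup hbdd hzero
  refine ciSup_le fun m => ?_
  set S := {r : ℝ | ∃ α : ℕ →₀ ℝ, (∀ n < m, α n = 0) ∧
    (∑ n ∈ α.support, |α n|) = 1 ∧ r = ‖∑ n ∈ α.support, α n • x n‖} with hS
  have hSne : S.Nonempty := by
    refine ⟨‖∑ n ∈ (Finsupp.single m (1:ℝ)).support, (Finsupp.single m (1:ℝ)) n • x n‖,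
      Finsupp.single m 1, ?_, ?_, rfl⟩
    · intro n hn
      exact Finsupp.single_eq_of_ne (ne_of_lt hn)
    · rw [Finsupp.support_single_ne_zero _ one_ne_zero]
      simp
  have hSbb : BddBelow S := by
    refine ⟨0, ?_⟩
    rintro r ⟨α, _, _, rfl⟩
    exact norm_nonneg _
  set c := sInf S with hc
  rcases le_or_gt c 0 with hc0 | hc0
  · exact le_trans hc0 h0
  -- key ℓ¹ lower estimate
  have hkey : ∀ α : ℕ →₀ ℝ, (∀ n < m, α n = 0) →
      c * (∑ n ∈ α.support, |α n|) ≤ ‖∑ n ∈ α.support, α n • x n‖ := by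
    intro α hα
    set s := ∑ n ∈ α.support, |α n| with hs
    have hs0 : 0 ≤ s := Finset.sum_nonneg fun n _ => abs_nonneg _
    rcases eq_or_lt_of_le hs0 with hs0' | hs0'
    · have hαz : ∀ n ∈ α.support, α n = 0 := by
        intro n hn
        have := (Finset.sum_eq_zero_iff_of_nonneg (fun k _ => abs_nonneg (α k))).1 hs0'.symm n hn
        exact abs_eq_zero.1 this
      have hsupp : α.support = ∅ := by
        ext n; simp only [Finsupp.mem_support_iff, Finset.notMem_empty, iff_false, not_not]
        by_contra h
        exact h (hαz n (Finsupp.mem_support_iff.2 h))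
      rw [← hs0', hsupp]
      simp
    · set β := s⁻¹ • α with hβ
      have hsinv : s⁻¹ ≠ 0 := inv_ne_zero (ne_of_gt hs0')
      have hsupp : β.support = α.support := Finsupp.support_smul_eq hsinv
      have hβa : ∀ n, β n = s⁻¹ * α n := fun n => rfl
      have hβm : ∀ n < m, β n = 0 := by
        intro n hn; rw [hβa, hα n hn, mul_zero]
      have hβsum : (∑ n ∈ β.support, |β n|) = 1 := by
        rw [hsupp]
        have : ∀ n ∈ α.support, |β n| = s⁻¹ * |α n| := by
          intro n _
          rw [hβa, abs_mul, abs_of_pos (inv_pos.2 hs0')]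
        rw [Finset.sum_congr rfl this, ← Finset.mul_sum, ← hs,
          inv_mul_cancel₀ (ne_of_gt hs0')]
      have hmem : ‖∑ n ∈ β.support, β n • x n‖ ∈ S := ⟨β, hβm, hβsum, rfl⟩
      have hcle : c ≤ ‖∑ n ∈ β.support, β n • x n‖ := csInf_le hSbb hmem
      have hrel : (∑ n ∈ α.support, α n • x n) = s • ∑ n ∈ β.support, β n • x n := by
        rw [hsupp, Finset.smul_sum]
        refine Finset.sum_congr rfl fun n _ => ?_
        rw [hβa, mul_smul, smul_smul, smul_smul, mul_inv_cancel₀ (ne_of_gt hs0'), one_mul]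
      have hnorm : ‖∑ n ∈ α.support, α n • x n‖
          = s * ‖∑ n ∈ β.support, β n • x n‖ := by
        rw [hrel, norm_smul, Real.norm_eq_abs, abs_of_pos hs0']
      rw [hnorm, mul_comm c s]
      exact mul_le_mul_of_nonneg_left hcle hs0
  obtain ⟨F, hFn1, hFx⟩ := exists_functional hc0 hkey
  have hlimsup : Filter.limsup (fun n => F (x n)) Filter.atTop = c := by
    have hev : ∀ᶠ n in Filter.atTop, F (x n) = c :=
      Filter.eventually_atTop.2 ⟨m, hFx⟩
    rw [Filter.limsup_congr hev, Filter.limsup_const]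
  exact le_csSup hbdd ⟨F, hFn1, hlimsup.symm⟩
end

section
/- Every bounded sequence (x_n) in a real Banach space contains an ε_J-stable subsequence, i.e. a subsequence (y_n) such that every further subsequence (z_n) of (y_n) satisfies ε_J(z_n) ≤ ε_J(y_n) (equivalently, sup over subsequences of ε_J equals ε_J(y_n)). -/
open Filter Topology

variable {X : Type*} [NormedAddCommGroup X] [NormedSpace ℝ X]

noncomputable def Aset (x : ℕ → X) (m : ℕ) : Set ℝ :=
  {r : ℝ | ∃ α : ℕ →₀ ℝ, (∀ n < m, α n = 0) ∧
    (∑ n ∈ α.support, |α n|) = 1 ∧ r = ‖∑ n ∈ α.support, α n • x n‖}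

lemma epsJ_eq (x : ℕ → X) : epsJ x = ⨆ m, sInf (Aset x m) := rfl

lemma norm_mem_Aset (x : ℕ → X) (m : ℕ) : ‖x m‖ ∈ Aset x m := by
  refine ⟨Finsupp.single m 1, ?_, ?_, ?_⟩
  · intro n hn
    rw [Finsupp.single_apply, if_neg (Nat.ne_of_gt hn)]
  · rw [Finsupp.support_single_ne_zero m one_ne_zero]
    simp
  · rw [Finsupp.support_single_ne_zero m one_ne_zero]
    simp

lemma Aset_nonempty (x : ℕ → X) (m : ℕ) : (Aset x m).Nonempty :=
  ⟨‖x m‖, norm_mem_Aset x m⟩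

lemma Aset_bddBelow (x : ℕ → X) (m : ℕ) : BddBelow (Aset x m) := by
  refine ⟨0, fun r hr => ?_⟩
  obtain ⟨α, -, -, hr⟩ := hr
  rw [hr]; exact norm_nonneg _

lemma sInf_Aset_le {x : ℕ → X} {C : ℝ} (hC : ∀ n, ‖x n‖ ≤ C) (m : ℕ) :
    sInf (Aset x m) ≤ C :=
  csInf_le_of_le (Aset_bddBelow x m) (norm_mem_Aset x m) (hC m)

lemma Aset_antitone (x : ℕ → X) {m m' : ℕ} (h : m ≤ m') : Aset x m' ⊆ Aset x m := by
  rintro r ⟨α, h1, h2, h3⟩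
  exact ⟨α, fun n hn => h1 n (lt_of_lt_of_le hn h), h2, h3⟩

lemma sInf_Aset_mono (x : ℕ → X) : Monotone (fun m => sInf (Aset x m)) :=
  fun m m' h => csInf_le_csInf (Aset_bddBelow x m) (Aset_nonempty x m') (Aset_antitone x h)

lemma bddAbove_range_sInf_Aset {x : ℕ → X} {C : ℝ} (hC : ∀ n, ‖x n‖ ≤ C) :
    BddAbove (Set.range fun m => sInf (Aset x m)) := by
  refine ⟨C, ?_⟩
  rintro r ⟨m, rfl⟩
  exact sInf_Aset_le hC m

lemma epsJ_le {x : ℕ → X} {C : ℝ} (hC : ∀ n, ‖x n‖ ≤ C) : epsJ x ≤ C := by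
  rw [epsJ_eq]
  exact ciSup_le (sInf_Aset_le hC)

lemma Aset_comp_subset (x : ℕ → X) {φ : ℕ → ℕ} (hφ : StrictMono φ) (m : ℕ) :
    Aset (x ∘ φ) m ⊆ Aset x m := by
  rintro r ⟨α, h1, h2, h3⟩
  refine ⟨α.embDomain ⟨φ, hφ.injective⟩, ?_, ?_, ?_⟩
  · intro k hk
    by_contra hne
    have hk' : k ∈ (α.embDomain ⟨φ, hφ.injective⟩).support := Finsupp.mem_support_iff.mpr hne
    rw [Finsupp.support_embDomain, Finset.mem_map] at hk'
    obtain ⟨n, hn, rfl⟩ := hk'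
    have hnm : m ≤ n := by
      by_contra hlt
      exact (Finsupp.mem_support_iff.mp hn) (h1 n (not_le.mp hlt))
    exact absurd hk (not_lt.mpr (le_trans hnm (hφ.le_apply)))
  · rw [Finsupp.support_embDomain, Finset.sum_map]
    simp only [Finsupp.embDomain_apply_self]
    exact h2
  · rw [Finsupp.support_embDomain, Finset.sum_map]
    simp only [Finsupp.embDomain_apply_self]
    exact h3

lemma epsJ_le_comp {x : ℕ → X} {C : ℝ} (hC : ∀ n, ‖x n‖ ≤ C) {φ : ℕ → ℕ}
    (hφ : StrictMono φ) : epsJ x ≤ epsJ (x ∘ φ) := by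
  rw [epsJ_eq, epsJ_eq]
  refine ciSup_mono (bddAbove_range_sInf_Aset (x := x ∘ φ) (C := C) (fun n => hC _)) ?_
  intro m
  exact csInf_le_csInf (Aset_bddBelow x m) (Aset_nonempty (x ∘ φ) m)
    (Aset_comp_subset x hφ m)

lemma Aset_congr_tail {y z : ℕ → X} {m : ℕ} (h : ∀ n, m ≤ n → y n = z n) :
    Aset y m ⊆ Aset z m := by
  rintro r ⟨α, h1, h2, h3⟩
  refine ⟨α, h1, h2, ?_⟩
  rw [h3]
  congr 1
  refine Finset.sum_congr rfl fun n hn => ?_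
  have : m ≤ n := by
    by_contra hlt
    exact (Finsupp.mem_support_iff.mp hn) (h1 n (not_le.mp hlt))
  rw [h n this]

lemma epsJ_le_of_tail {y z : ℕ → X} {C : ℝ} (hz : ∀ n, ‖z n‖ ≤ C) {N : ℕ}
    (h : ∀ n, N ≤ n → y n = z n) : epsJ y ≤ epsJ z := by
  rw [epsJ_eq, epsJ_eq]
  refine ciSup_le fun m => ?_
  have h1 : sInf (Aset y m) ≤ sInf (Aset y (max m N)) :=
    sInf_Aset_mono y (le_max_left m N)
  have h2 : Aset y (max m N) = Aset z (max m N) := by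
    apply le_antisymm
    · exact Aset_congr_tail (fun n hn => h n (le_trans (le_max_right m N) hn))
    · exact Aset_congr_tail (fun n hn => (h n (le_trans (le_max_right m N) hn)).symm)
  calc sInf (Aset y m) ≤ sInf (Aset z (max m N)) := by rw [← h2]; exact h1
    _ ≤ ⨆ k, sInf (Aset z k) := le_ciSup (bddAbove_range_sInf_Aset hz) (max m N)

lemma epsJ_le_tilde {x : ℕ → X} {C : ℝ} (hC : ∀ n, ‖x n‖ ≤ C) {φ : ℕ → ℕ}
    (hφ : StrictMono φ) : epsJ (x ∘ φ) ≤ tildeEpsJ x := by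
  refine le_csSup ⟨C, ?_⟩ ⟨φ, hφ, rfl⟩
  rintro r ⟨ψ, hψ, rfl⟩
  exact epsJ_le (fun n => hC _)

lemma exists_near_tilde {x : ℕ → X} {ε : ℝ} (hε : 0 < ε) :
    ∃ ψ : ℕ → ℕ, StrictMono ψ ∧ tildeEpsJ x - ε < epsJ (x ∘ ψ) := by
  obtain ⟨r, ⟨ψ, hψ, rfl⟩, hlt⟩ :=
    exists_lt_of_lt_csSup (s := {r : ℝ | ∃ φ : ℕ → ℕ, StrictMono φ ∧ r = epsJ (x ∘ φ)})
      ⟨epsJ (x ∘ id), id, strictMono_id, rfl⟩ (by linarith : tildeEpsJ x - ε < tildeEpsJ x)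
  exact ⟨ψ, hψ, hlt⟩

theorem stmt5 [CompleteSpace X] (x : ℕ → X) (hx : BoundedSeq x) :
    ∃ φ : ℕ → ℕ, StrictMono φ ∧
      ∀ ψ : ℕ → ℕ, StrictMono ψ → epsJ ((x ∘ φ) ∘ ψ) ≤ epsJ (x ∘ φ) := by
  obtain ⟨C0, hC0⟩ := hx
  have hC : ∀ n, ‖x n‖ ≤ max C0 0 := fun n => le_max_of_le_left (hC0 n)
  set C := max C0 0 with hCdef
  -- choice of near-optimal subsequences
  have H : ∀ (m : ℕ) (φ : ℕ → ℕ), StrictMono φ → ∃ ψ : ℕ → ℕ, StrictMono ψ ∧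
      tildeEpsJ (x ∘ φ) - (1/2 : ℝ) ^ m < epsJ ((x ∘ φ) ∘ ψ) := by
    intro m φ hφ
    exact exists_near_tilde (by positivity)
  choose Ψ hΨmono hΨ using H
  -- the nested subsequences
  let Θ : ℕ → {f : ℕ → ℕ // StrictMono f} := fun m =>
    Nat.rec ⟨id, strictMono_id⟩
      (fun m p => ⟨p.1 ∘ Ψ m p.1 p.2, p.2.comp (hΨmono m p.1 p.2)⟩) m
  have hΘs : ∀ m, (Θ (m+1)).1 = (Θ m).1 ∘ Ψ m (Θ m).1 (Θ m).2 := fun m => rfl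
  have hstep : ∀ m, tildeEpsJ (x ∘ (Θ m).1) - (1/2 : ℝ) ^ m < epsJ (x ∘ (Θ (m+1)).1) :=
    fun m => hΨ m (Θ m).1 (Θ m).2
  -- remainders
  let R : ℕ → ℕ → {f : ℕ → ℕ // StrictMono f} := fun m k =>
    Nat.rec ⟨id, strictMono_id⟩
      (fun k p => ⟨p.1 ∘ Ψ (m+k) (Θ (m+k)).1 (Θ (m+k)).2,
        p.2.comp (hΨmono (m+k) (Θ (m+k)).1 (Θ (m+k)).2)⟩) k
  have hR : ∀ m k, (Θ (m+k)).1 = (Θ m).1 ∘ (R m k).1 := by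
    intro m k
    induction k with
    | zero => rfl
    | succ k ih =>
      show (Θ ((m+k)+1)).1 = (Θ m).1 ∘ ((R m k).1 ∘ Ψ (m+k) (Θ (m+k)).1 (Θ (m+k)).2)
      rw [hΘs (m+k)]
      exact congrArg (fun f => f ∘ Ψ (m+k) (Θ (m+k)).1 (Θ (m+k)).2) ih
  -- diagonal sequence
  set d : ℕ → ℕ := fun n => (Θ n).1 n with hd_def
  have hd : StrictMono d := by
    apply strictMono_nat_of_lt_succ
    intro n
    have h1 : d (n+1) = (Θ n).1 (Ψ n (Θ n).1 (Θ n).2 (n+1)) := by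
      show (Θ (n+1)).1 (n+1) = _
      rw [hΘs n]; rfl
    rw [h1]
    exact (Θ n).2 (lt_of_lt_of_le (Nat.lt_succ_self n) (hΨmono n (Θ n).1 (Θ n).2).le_apply)
  -- tail representation of the diagonal
  have hg : ∀ m, ∃ g : ℕ → ℕ, StrictMono g ∧ ∀ n, m ≤ n → d n = (Θ m).1 (g n) := by
    intro m
    refine ⟨fun n => if n < m then n else (R m (n - m)).1 n, ?_, ?_⟩
    · apply strictMono_nat_of_lt_succ
      intro n
      show (if n < m then n else (R m (n - m)).1 n) <
        (if n + 1 < m then n + 1 else (R m (n + 1 - m)).1 (n + 1))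
      by_cases h1 : n + 1 < m
      · rw [if_pos (Nat.lt_of_succ_lt h1), if_pos h1]; exact Nat.lt_succ_self n
      · rw [if_neg h1]
        by_cases h2 : n < m
        · rw [if_pos h2]
          have hm : n + 1 = m := le_antisymm (by omega) (by omega)
          have : (R m (n + 1 - m)).1 (n+1) = n + 1 := by
            rw [show n + 1 - m = 0 from by omega]; rfl
          rw [this]; exact Nat.lt_succ_self n
        · rw [if_neg h2]
          have hmn : m ≤ n := not_lt.mp h2
          have hsub : n + 1 - m = (n - m) + 1 := by omega
          have hRs : (R m ((n-m)+1)).1 (n+1)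
              = (R m (n-m)).1 (Ψ (m+(n-m)) (Θ (m+(n-m))).1 (Θ (m+(n-m))).2 (n+1)) := rfl
          rw [hsub, hRs]
          exact (R m (n-m)).2 (lt_of_lt_of_le (Nat.lt_succ_self n)
            (hΨmono (m+(n-m)) (Θ (m+(n-m))).1 (Θ (m+(n-m))).2).le_apply)
    · intro n hn
      show d n = (Θ m).1 (if n < m then n else (R m (n - m)).1 n)
      rw [if_neg (not_lt.mpr hn)]
      have : d n = (Θ (m + (n - m))).1 n := by
        rw [show m + (n - m) = n from by omega]
      rw [this, hR m (n - m)]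
      rfl
  refine ⟨d, hd, ?_⟩
  intro ψ hψ
  -- main estimate
  have key : ∀ m : ℕ, epsJ ((x ∘ d) ∘ ψ) ≤ epsJ (x ∘ d) + (1/2 : ℝ) ^ m := by
    intro m
    obtain ⟨g, hgmono, hgd⟩ := hg m
    have e1 : epsJ ((x ∘ d) ∘ ψ) ≤ epsJ ((x ∘ (Θ m).1) ∘ (g ∘ ψ)) := by
      refine epsJ_le_of_tail (N := m) (fun n => hC _) ?_
      intro n hn
      show x (d (ψ n)) = x ((Θ m).1 (g (ψ n)))
      rw [hgd (ψ n) (le_trans hn hψ.le_apply)]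
    have e2 : epsJ ((x ∘ (Θ m).1) ∘ (g ∘ ψ)) ≤ tildeEpsJ (x ∘ (Θ m).1) :=
      epsJ_le_tilde (fun n => hC _) (hgmono.comp hψ)
    have e3 : tildeEpsJ (x ∘ (Θ m).1) < epsJ (x ∘ (Θ (m+1)).1) + (1/2 : ℝ) ^ m := by
      have := hstep m; linarith
    have e4 : epsJ (x ∘ (Θ (m+1)).1) ≤ epsJ (x ∘ d) := by
      obtain ⟨g', hg'mono, hg'd⟩ := hg (m+1)
      have e4a : epsJ (x ∘ (Θ (m+1)).1) ≤ epsJ ((x ∘ (Θ (m+1)).1) ∘ g') :=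
        epsJ_le_comp (C := C) (fun n => hC _) hg'mono
      have e4b : epsJ ((x ∘ (Θ (m+1)).1) ∘ g') ≤ epsJ (x ∘ d) := by
        refine epsJ_le_of_tail (N := m+1) (fun n => hC _) ?_
        intro n hn
        show x ((Θ (m+1)).1 (g' n)) = x (d n)
        rw [← hg'd n hn]
      exact le_trans e4a e4b
    linarith
  refine le_of_forall_pos_le_add ?_
  intro ε hε
  obtain ⟨m, hm⟩ := exists_pow_lt_of_lt_one hε (by norm_num : (1/2 : ℝ) < 1)
  exact le_trans (key m) (by linarith)
end

section
/- Every bounded sequence (x_n) in a real Banach space contains a δ-stable subsequence, i.e. a subsequence (y_n) such that every further subsequence (z_n) satisfies δ(z_n) ≥ δ(y_n) (equivalently, inf over subsequences of δ equals δ(y_n)). -/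
open Filter Topology

variable {X : Type*} [NormedAddCommGroup X] [NormedSpace ℝ X]

section auxstmt6

variable {X : Type*} [NormedAddCommGroup X] [NormedSpace ℝ X]

/-- the oscillation set defining `delta` -/
private def dset (y : ℕ → X) : Set ℝ :=
  {r : ℝ | ∃ f ∈ {f : X →L[ℝ] ℝ | ‖f‖ ≤ 1}, r = Filter.limsup (fun n => f (y n)) Filter.atTop
    - Filter.liminf (fun n => f (y n)) Filter.atTop}

private lemma delta_eq_sSup_dset (y : ℕ → X) : delta y = sSup (dset y) := rfl

private lemma abs_eval_le {C : ℝ} {y : ℕ → X} (hy : ∀ n, ‖y n‖ ≤ C)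
    {f : X →L[ℝ] ℝ} (hf : ‖f‖ ≤ 1) (n : ℕ) : |f (y n)| ≤ C := by
  calc |f (y n)| = ‖f (y n)‖ := rfl
    _ ≤ ‖f‖ * ‖y n‖ := f.le_opNorm _
    _ ≤ 1 * C := by
        apply mul_le_mul hf (hy n) (norm_nonneg _) zero_le_one
    _ = C := one_mul C

private lemma zero_mem_dset (y : ℕ → X) : (0 : ℝ) ∈ dset y := by
  refine ⟨0, by simp, ?_⟩
  simp [Filter.limsup_const, Filter.liminf_const]

private lemma dset_le {C : ℝ} {y : ℕ → X} (hy : ∀ n, ‖y n‖ ≤ C) :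
    ∀ r ∈ dset y, r ≤ 2 * C := by
  rintro r ⟨f, hf, rfl⟩
  have hb : ∀ n, |f (y n)| ≤ C := abs_eval_le hy hf
  have h1 : Filter.limsup (fun n => f (y n)) Filter.atTop ≤ C := by
    apply Filter.limsup_le_of_le
    · exact Filter.isCoboundedUnder_le_of_le Filter.atTop (fun n => (abs_le.1 (hb n)).1)
    · exact Filter.Eventually.of_forall (fun n => (abs_le.1 (hb n)).2)
  have h2 : -C ≤ Filter.liminf (fun n => f (y n)) Filter.atTop := by
    apply Filter.le_liminf_of_le
    · exact Filter.isCoboundedUnder_ge_of_le Filter.atTop (fun n => (abs_le.1 (hb n)).2)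
    · exact Filter.Eventually.of_forall (fun n => (abs_le.1 (hb n)).1)
  linarith

private lemma dset_bddAbove {C : ℝ} {y : ℕ → X} (hy : ∀ n, ‖y n‖ ≤ C) :
    BddAbove (dset y) := ⟨2 * C, fun r hr => dset_le hy r hr⟩

private lemma delta_nonneg {C : ℝ} {y : ℕ → X} (hy : ∀ n, ‖y n‖ ≤ C) : 0 ≤ delta y :=
  le_csSup (dset_bddAbove hy) (zero_mem_dset y)

private lemma delta_subseq_le {C : ℝ} {y : ℕ → X} (hy : ∀ n, ‖y n‖ ≤ C)
    {φ : ℕ → ℕ} (hφ : StrictMono φ) : delta (y ∘ φ) ≤ delta y := by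
  rw [delta_eq_sSup_dset, delta_eq_sSup_dset]
  apply Real.sSup_le _ (delta_nonneg hy)
  rintro r ⟨f, hf, rfl⟩
  have hb : ∀ n, |f (y n)| ≤ C := abs_eval_le hy hf
  have hmap : Filter.map φ Filter.atTop ≤ Filter.atTop := hφ.tendsto_atTop
  have key : ∀ (u : ℕ → ℝ), u = (fun n => f (y n)) →
      Filter.limsup (fun n => f (y (φ n))) Filter.atTop = Filter.limsup u (Filter.map φ Filter.atTop)
      ∧ Filter.liminf (fun n => f (y (φ n))) Filter.atTop = Filter.liminf u (Filter.map φ Filter.atTop) := by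
    rintro u rfl
    constructor
    · rw [Filter.limsup, Filter.limsup, Filter.map_map]; rfl
    · rw [Filter.liminf, Filter.liminf, Filter.map_map]; rfl
  obtain ⟨k1, k2⟩ := key _ rfl
  have hls : Filter.limsup (fun n => f (y (φ n))) Filter.atTop
      ≤ Filter.limsup (fun n => f (y n)) Filter.atTop := by
    rw [k1]
    have b1 : Filter.IsBoundedUnder (· ≥ ·) (Filter.map φ Filter.atTop) (fun n => f (y n)) :=
      Filter.isBoundedUnder_of ⟨-C, fun n => (abs_le.1 (hb n)).1⟩
    have b2 : Filter.IsBoundedUnder (· ≤ ·) Filter.atTop (fun n => f (y n)) :=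
      Filter.isBoundedUnder_of ⟨C, fun n => (abs_le.1 (hb n)).2⟩
    exact Filter.limsup_le_limsup_of_le hmap b1.isCoboundedUnder_le b2
  have hli : Filter.liminf (fun n => f (y n)) Filter.atTop
      ≤ Filter.liminf (fun n => f (y (φ n))) Filter.atTop := by
    rw [k2]
    have b1 : Filter.IsBoundedUnder (· ≥ ·) Filter.atTop (fun n => f (y n)) :=
      Filter.isBoundedUnder_of ⟨-C, fun n => (abs_le.1 (hb n)).1⟩
    have b2 : Filter.IsBoundedUnder (· ≤ ·) (Filter.map φ Filter.atTop) (fun n => f (y n)) :=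
      Filter.isBoundedUnder_of ⟨C, fun n => (abs_le.1 (hb n)).2⟩
    exact Filter.liminf_le_liminf_of_le hmap b1 b2.isCoboundedUnder_ge
  have hmem : Filter.limsup (fun n => f (y n)) Filter.atTop
      - Filter.liminf (fun n => f (y n)) Filter.atTop ∈ dset y := ⟨f, hf, rfl⟩
  have := le_csSup (dset_bddAbove hy) hmem
  have : Filter.limsup (fun n => f (y (φ n))) Filter.atTop
      - Filter.liminf (fun n => f (y (φ n))) Filter.atTop
      ≤ Filter.limsup (fun n => f (y n)) Filter.atTop
      - Filter.liminf (fun n => f (y n)) Filter.atTop := by linarith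
  exact le_trans this (le_csSup (dset_bddAbove hy) hmem)

private lemma delta_shift (y : ℕ → X) (k : ℕ) : delta (fun n => y (n + k)) = delta y := by
  rw [delta_eq_sSup_dset, delta_eq_sSup_dset]
  congr 1
  ext r
  constructor
  · rintro ⟨f, hf, rfl⟩
    refine ⟨f, hf, ?_⟩
    rw [Filter.limsup_nat_add (fun n => f (y n)) k, Filter.liminf_nat_add (fun n => f (y n)) k]
  · rintro ⟨f, hf, rfl⟩
    refine ⟨f, hf, ?_⟩
    rw [Filter.limsup_nat_add (fun n => f (y n)) k, Filter.liminf_nat_add (fun n => f (y n)) k]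

/-- the set of values of `delta` on subsequences -/
private def tset (y : ℕ → X) : Set ℝ :=
  {r : ℝ | ∃ φ : ℕ → ℕ, StrictMono φ ∧ r = delta (y ∘ φ)}

private lemma tset_nonempty (y : ℕ → X) : (tset y).Nonempty :=
  ⟨delta (y ∘ id), id, strictMono_id, rfl⟩

private lemma tset_bddBelow {C : ℝ} {y : ℕ → X} (hy : ∀ n, ‖y n‖ ≤ C) :
    BddBelow (tset y) := by
  refine ⟨0, ?_⟩
  rintro r ⟨φ, hφ, rfl⟩
  exact delta_nonneg (C := C) (fun n => hy (φ n))

end auxstmt6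

theorem stmt6 [CompleteSpace X] (x : ℕ → X) (hx : BoundedSeq x) :
    ∃ φ : ℕ → ℕ, StrictMono φ ∧
      ∀ ψ : ℕ → ℕ, StrictMono ψ → delta ((x ∘ φ) ∘ ψ) ≥ delta (x ∘ φ) := by
  classical
  obtain ⟨C, hC⟩ := hx
  -- bound for every "reindexed" sequence
  have hCb : ∀ g : ℕ → ℕ, ∀ n, ‖(x ∘ g) n‖ ≤ C := fun g n => hC (g n)
  -- the key choice step
  have hstep : ∀ (k : ℕ) (g : ℕ → ℕ), StrictMono g → ∃ ψ : ℕ → ℕ, StrictMono ψ ∧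
      delta (x ∘ g ∘ ψ) < sInf (tset (x ∘ g)) + 1 / (k + 1) := by
    intro k g hg
    have h1 : (0:ℝ) < 1 / (k + 1) := by positivity
    have h2 : sInf (tset (x ∘ g)) < sInf (tset (x ∘ g)) + 1 / (k + 1) := by linarith
    obtain ⟨r, ⟨ψ, hψ, rfl⟩, hr⟩ := exists_lt_of_csInf_lt (tset_nonempty (x ∘ g)) h2
    exact ⟨ψ, hψ, hr⟩
  -- iterate
  let F : ℕ → {g : ℕ → ℕ // StrictMono g} → {g : ℕ → ℕ // StrictMono g} := fun k g =>
    ⟨g.1 ∘ Classical.choose (hstep k g.1 g.2),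
      g.2.comp (Classical.choose_spec (hstep k g.1 g.2)).1⟩
  let Φ : ℕ → {g : ℕ → ℕ // StrictMono g} := fun k => Nat.rec ⟨id, strictMono_id⟩ F k
  have hΦsucc : ∀ k, Φ (k + 1) = F k (Φ k) := fun k => rfl
  set ψk : ℕ → ℕ → ℕ := fun k => Classical.choose (hstep k (Φ k).1 (Φ k).2) with hψkdef
  have hψk : ∀ k, StrictMono (ψk k) := fun k => (Classical.choose_spec (hstep k (Φ k).1 (Φ k).2)).1
  have hδk : ∀ k, delta (x ∘ (Φ (k+1)).1) < sInf (tset (x ∘ (Φ k).1)) + 1 / (k + 1) := by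
    intro k
    exact (Classical.choose_spec (hstep k (Φ k).1 (Φ k).2)).2
  have hΦcomp : ∀ k, (Φ (k+1)).1 = (Φ k).1 ∘ ψk k := fun k => rfl
  -- factorization maps
  let θ : ℕ → ℕ → ℕ → ℕ := fun k m => Nat.rec id (fun j t => t ∘ ψk (k + j)) m
  have hθ0 : ∀ k, θ k 0 = id := fun k => rfl
  have hθsucc : ∀ k m, θ k (m+1) = θ k m ∘ ψk (k + m) := fun k m => rfl
  have hθmono : ∀ k m, StrictMono (θ k m) := by
    intro k m
    induction m with
    | zero => exact strictMono_id
    | succ m ih => exact ih.comp (hψk (k + m))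
  have hθfac : ∀ k m, (Φ (k + m)).1 = (Φ k).1 ∘ θ k m := by
    intro k m
    induction m with
    | zero => rfl
    | succ m ih =>
      rw [show k + (m+1) = (k + m) + 1 from rfl, hΦcomp, ih, hθsucc]
      rfl
  -- diagonal
  let d : ℕ → ℕ := fun n => (Φ n).1 n
  have hdmono : StrictMono d := by
    apply strictMono_nat_of_lt_succ
    intro n
    have h1 : d (n + 1) = (Φ n).1 (ψk n (n + 1)) := congrFun (congrArg Subtype.val (hΦsucc n)) (n+1)
    have h2 : n + 1 ≤ ψk n (n + 1) := (hψk n).le_apply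
    have h3 : (Φ n).1 n < (Φ n).1 (ψk n (n + 1)) := (Φ n).2 (lt_of_lt_of_le (Nat.lt_succ_self n) h2)
    rw [show d (n+1) = (Φ n).1 (ψk n (n + 1)) from h1]
    exact h3
  -- factorization of the diagonal beyond k
  let e : ℕ → ℕ → ℕ := fun k m => θ k (m - k) m
  have hde : ∀ k m, k ≤ m → d m = (Φ k).1 (e k m) := by
    intro k m hkm
    have : k + (m - k) = m := Nat.add_sub_cancel' hkm
    calc d m = (Φ (k + (m - k))).1 m := by rw [this]
      _ = (Φ k).1 (θ k (m - k) m) := by rw [hθfac]; rfl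
  have hestep : ∀ k m, k ≤ m → e k m < e k (m + 1) := by
    intro k m hkm
    have h1 : m + 1 - k = (m - k) + 1 := by omega
    have h2 : e k (m + 1) = θ k (m - k) (ψk (k + (m - k)) (m + 1)) := by
      show θ k (m + 1 - k) (m + 1) = _
      rw [h1, hθsucc]
      rfl
    have h3 : k + (m - k) = m := Nat.add_sub_cancel' hkm
    rw [h2, h3]
    have h4 : m < ψk m (m + 1) := lt_of_lt_of_le (Nat.lt_succ_self m) (hψk m).le_apply
    exact hθmono k (m - k) h4
  have hemono : ∀ k m₁ m₂, k ≤ m₁ → m₁ < m₂ → e k m₁ < e k m₂ := by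
    intro k m₁ m₂ hk h
    induction m₂ with
    | zero => omega
    | succ m₂ ih =>
      rcases Nat.lt_succ_iff_lt_or_eq.1 h with h' | h'
      · exact lt_trans (ih h') (hestep k m₂ (le_trans hk (le_of_lt h')))
      · subst h'; exact hestep k m₁ hk
  refine ⟨d, hdmono, ?_⟩
  intro ψ hψ
  -- lower bound: for every k, sInf (tset (x ∘ (Φ k).1)) ≤ delta ((x ∘ d) ∘ ψ)
  have hlow : ∀ k, sInf (tset (x ∘ (Φ k).1)) ≤ delta ((x ∘ d) ∘ ψ) := by
    intro k
    set τ : ℕ → ℕ := fun n => e k (ψ (n + k)) with hτdef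
    have hτmono : StrictMono τ := by
      intro a b hab
      apply hemono k
      · exact le_trans (Nat.le_add_left k a) hψ.le_apply
      · exact hψ (by omega)
    have hfac : (fun n => ((x ∘ d) ∘ ψ) (n + k)) = (x ∘ (Φ k).1) ∘ τ := by
      funext n
      have h1 : k ≤ ψ (n + k) := le_trans (Nat.le_add_left k n) hψ.le_apply
      exact congrArg x (hde k (ψ (n + k)) h1)
    have h2 : delta ((x ∘ d) ∘ ψ) = delta ((x ∘ (Φ k).1) ∘ τ) := by
      rw [← delta_shift ((x ∘ d) ∘ ψ) k, hfac]
    rw [h2]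
    exact csInf_le (tset_bddBelow (hCb ((Φ k).1))) ⟨τ, hτmono, rfl⟩
  -- upper bound: delta (x ∘ d) < sInf (tset (x ∘ (Φ k).1)) + 1/(k+1)
  have hup : ∀ k : ℕ, delta (x ∘ d) < sInf (tset (x ∘ (Φ k).1)) + 1 / (k + 1) := by
    intro k
    set σ : ℕ → ℕ := fun n => e (k + 1) (n + (k + 1)) with hσdef
    have hσmono : StrictMono σ := by
      intro a b hab
      exact hemono (k + 1) _ _ (Nat.le_add_left _ a) (by omega)
    have hfac : (fun n => (x ∘ d) (n + (k + 1))) = (x ∘ (Φ (k + 1)).1) ∘ σ := by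
      funext n
      exact congrArg x (hde (k + 1) (n + (k + 1)) (Nat.le_add_left _ n))
    have h1 : delta (x ∘ d) = delta ((x ∘ (Φ (k + 1)).1) ∘ σ) := by
      rw [← delta_shift (x ∘ d) (k + 1), hfac]
    have h2 : delta ((x ∘ (Φ (k + 1)).1) ∘ σ) ≤ delta (x ∘ (Φ (k + 1)).1) :=
      delta_subseq_le (hCb ((Φ (k+1)).1)) hσmono
    calc delta (x ∘ d) ≤ delta (x ∘ (Φ (k + 1)).1) := h1 ▸ h2
      _ < sInf (tset (x ∘ (Φ k).1)) + 1 / (k + 1) := hδk k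
  -- conclude
  apply le_of_forall_pos_le_add
  intro ε hε
  obtain ⟨k, hk⟩ := exists_nat_one_div_lt hε
  have := lt_trans (hup k) (by linarith [hlow k] : sInf (tset (x ∘ (Φ k).1)) + 1 / (k + 1)
      < delta ((x ∘ d) ∘ ψ) + ε)
  exact le_of_lt this
end

section
/- Let B ⊆ S(X*) be a boundary for a real Banach space X (for each x ∈ X there is b ∈ B with b(x) = ‖x‖). Then for every bounded sequence (x_n): δ_B(x_n) = δ(x_n), where δ_D(x_n) = sup_{x*∈D}(limsup x*(x_n) − liminf x*(x_n)). -/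
open Filter Topology

variable {X : Type*} [NormedAddCommGroup X] [NormedSpace ℝ X]

lemma auxAbs {f : X →L[ℝ] ℝ} (hf : ‖f‖ ≤ 1) {z : X} {C : ℝ} (hz : ‖z‖ ≤ C) : |f z| ≤ C := by
  calc |f z| = ‖f z‖ := (Real.norm_eq_abs _).symm
    _ ≤ ‖f‖ * ‖z‖ := f.le_opNorm z
    _ ≤ 1 * C := mul_le_mul hf hz (norm_nonneg z) zero_le_one
    _ = C := one_mul C

lemma auxHullLe {s : Set X} {g : X →L[ℝ] ℝ} {c : ℝ} (h : ∀ z ∈ s, g z ≤ c) :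
    ∀ v ∈ closure (convexHull ℝ s), g v ≤ c := fun v hv =>
  closure_minimal (convexHull_min h (convex_halfSpace_le ⟨g.map_add, g.map_smul⟩ c))
    (isClosed_le g.continuous continuous_const) hv

lemma auxHullGe {s : Set X} {g : X →L[ℝ] ℝ} {c : ℝ} (h : ∀ z ∈ s, c ≤ g z) :
    ∀ v ∈ closure (convexHull ℝ s), c ≤ g v := fun v hv =>
  closure_minimal (convexHull_min h (convex_halfSpace_ge ⟨g.map_add, g.map_smul⟩ c))
    (isClosed_le continuous_const g.continuous) hv

lemma auxHullNorm {s : Set X} {M : ℝ} (h : ∀ z ∈ s, ‖z‖ ≤ M) :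
    ∀ v ∈ closure (convexHull ℝ s), ‖v‖ ≤ M := by
  intro v hv
  have hsub : closure (convexHull ℝ s) ⊆ Metric.closedBall 0 M :=
    closure_minimal (convexHull_min (fun z hz => by
      simpa [Metric.mem_closedBall, dist_zero_right] using h z hz)
      (convex_closedBall 0 M)) Metric.isClosed_closedBall
  simpa [Metric.mem_closedBall, dist_zero_right] using hsub hv

lemma auxSummable [CompleteSpace X] {v : ℕ → X} {M : ℝ} (hM : ∀ j, ‖v j‖ ≤ M) :
    Summable (fun j => (2:ℝ)⁻¹ ^ (j+1) • v j) := by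
  have hM0 : 0 ≤ M := le_trans (norm_nonneg _) (hM 0)
  apply Summable.of_norm_bounded (g := fun j => M * (2:ℝ)⁻¹ ^ j)
    ((summable_geometric_of_lt_one (by norm_num) (by norm_num)).mul_left M)
  intro j
  rw [norm_smul, Real.norm_eq_abs, abs_of_nonneg (by positivity : (0:ℝ) ≤ (2:ℝ)⁻¹ ^ (j+1))]
  have h2 : (2:ℝ)⁻¹ ^ (j+1) ≤ (2:ℝ)⁻¹ ^ j :=
    pow_le_pow_of_le_one (by norm_num) (by norm_num) (Nat.le_succ j)
  have := hM j
  nlinarith [norm_nonneg (v j), pow_nonneg (by norm_num : (0:ℝ) ≤ 2⁻¹) j]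

lemma auxTsumMem [CompleteSpace X] {C : Set X} (hC : Convex ℝ C) (hCl : IsClosed C) {v : ℕ → X}
    (hv : ∀ j, v j ∈ C) {M : ℝ} (hM : ∀ j, ‖v j‖ ≤ M) :
    (∑' j, (2:ℝ)⁻¹ ^ (j+1) • v j) ∈ C := by
  have hsum : Summable (fun j => (2:ℝ)⁻¹ ^ (j+1) • v j) := auxSummable hM
  have hpartial : Tendsto (fun m => ∑ j ∈ Finset.range m, (2:ℝ)⁻¹ ^ (j+1) • v j) atTop
      (𝓝 (∑' j, (2:ℝ)⁻¹ ^ (j+1) • v j)) := hsum.hasSum.tendsto_sum_nat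
  have hgeo : ∀ m, ∑ j ∈ Finset.range m, (2:ℝ)⁻¹ ^ (j+1) = 1 - (2:ℝ)⁻¹ ^ m := by
    intro m
    induction m with
    | zero => simp
    | succ n ih => rw [Finset.sum_range_succ, ih, pow_succ]; ring
  have hQ : ∀ m, (∑ j ∈ Finset.range m, (2:ℝ)⁻¹ ^ (j+1) • v j) + (2:ℝ)⁻¹ ^ m • v 0 ∈ C := by
    intro m
    have hmem := hC.sum_mem (t := Finset.range (m+1))
      (w := fun j => if j < m then (2:ℝ)⁻¹ ^ (j+1) else (2:ℝ)⁻¹ ^ m)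
      (z := fun j => if j < m then v j else v 0)
      (fun i _ => by by_cases hi : i < m <;> simp [hi] <;> positivity)
      (by
        rw [Finset.sum_range_succ, if_neg (lt_irrefl m),
          Finset.sum_congr rfl (fun j hj => if_pos (Finset.mem_range.1 hj)), hgeo m]
        ring)
      (fun i _ => by by_cases hi : i < m <;> simp [hi] <;> apply hv)
    have heq : ∑ j ∈ Finset.range (m+1),
        (if j < m then (2:ℝ)⁻¹ ^ (j+1) else (2:ℝ)⁻¹ ^ m) • (if j < m then v j else v 0)
        = (∑ j ∈ Finset.range m, (2:ℝ)⁻¹ ^ (j+1) • v j) + (2:ℝ)⁻¹ ^ m • v 0 := by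
      rw [Finset.sum_range_succ, if_neg (lt_irrefl m), if_neg (lt_irrefl m)]
      congr 1
      exact Finset.sum_congr rfl (fun j hj => by
        rw [if_pos (Finset.mem_range.1 hj), if_pos (Finset.mem_range.1 hj)])
    rwa [heq] at hmem
  have hQt : Tendsto (fun m => (∑ j ∈ Finset.range m, (2:ℝ)⁻¹ ^ (j+1) • v j)
      + (2:ℝ)⁻¹ ^ m • v 0) atTop (𝓝 (∑' j, (2:ℝ)⁻¹ ^ (j+1) • v j)) := by
    have h0 : Tendsto (fun m : ℕ => (2:ℝ)⁻¹ ^ m • v 0) atTop (𝓝 ((0:ℝ) • v 0)) :=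
      (tendsto_pow_atTop_nhds_zero_of_lt_one (by norm_num) (by norm_num)).smul_const (v 0)
    rw [zero_smul] at h0
    simpa using hpartial.add h0
  exact hCl.mem_of_tendsto hQt (Eventually.of_forall hQ)

lemma auxLimsupSub {u v : ℕ → ℝ} {K : ℝ} (hu : ∀ n, |u n| ≤ K) (hv : ∀ n, |v n| ≤ K) :
    limsup (fun n => u n - v n) atTop ≤ limsup u atTop - liminf v atTop := by
  refine le_of_forall_pos_le_add fun ε hε => ?_
  have hbu : IsBoundedUnder (· ≤ ·) atTop u := isBoundedUnder_of ⟨K, fun n => (abs_le.1 (hu n)).2⟩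
  have hbv : IsBoundedUnder (· ≥ ·) atTop v := isBoundedUnder_of ⟨-K, fun n => (abs_le.1 (hv n)).1⟩
  have h1 : ∀ᶠ n in atTop, u n < limsup u atTop + ε/2 :=
    eventually_lt_of_limsup_lt (by linarith) hbu
  have h2 : ∀ᶠ n in atTop, liminf v atTop - ε/2 < v n :=
    eventually_lt_of_lt_liminf (by linarith) hbv
  have hcob : IsCoboundedUnder (· ≤ ·) atTop (fun n => u n - v n) :=
    IsBoundedUnder.isCoboundedUnder_le
      (isBoundedUnder_of ⟨-(K+K), fun n => by
        have h3 := (abs_le.1 (hu n)).1; have h4 := (abs_le.1 (hv n)).2; simp; linarith⟩)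
  exact limsup_le_of_le hcob ((h1.and h2).mono fun n hn => by
    have := hn.1; have := hn.2; linarith)

lemma auxLimsupComp {g : ℕ → ℝ} {K : ℝ} (hg : ∀ n, |g n| ≤ K) {p : ℕ → ℕ} (hp : ∀ k, k ≤ p k) :
    limsup (fun k => g (p k)) atTop ≤ limsup g atTop := by
  have hten : Tendsto p atTop atTop := tendsto_atTop_mono hp tendsto_id
  haveI : NeBot (Filter.map p atTop) := Filter.map_neBot
  have hco : IsCoboundedUnder (· ≤ ·) (Filter.map p atTop) g :=
    IsBoundedUnder.isCoboundedUnder_le (isBoundedUnder_of ⟨-K, fun n => (abs_le.1 (hg n)).1⟩)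
  have hbd : IsBoundedUnder (· ≤ ·) atTop g := isBoundedUnder_of ⟨K, fun n => (abs_le.1 (hg n)).2⟩
  calc limsup (fun k => g (p k)) atTop = limsup g (Filter.map p atTop) := by
        rw [Filter.limsup, Filter.limsup, Filter.map_map]; rfl
    _ ≤ limsup g atTop := limsup_le_limsup_of_le hten hco hbd

lemma auxLiminfComp {g : ℕ → ℝ} {K : ℝ} (hg : ∀ n, |g n| ≤ K) {p : ℕ → ℕ} (hp : ∀ k, k ≤ p k) :
    liminf g atTop ≤ liminf (fun k => g (p k)) atTop := by
  have hten : Tendsto p atTop atTop := tendsto_atTop_mono hp tendsto_id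
  haveI : NeBot (Filter.map p atTop) := Filter.map_neBot
  have hco : IsCoboundedUnder (· ≥ ·) (Filter.map p atTop) g :=
    IsBoundedUnder.isCoboundedUnder_ge (isBoundedUnder_of ⟨K, fun n => (abs_le.1 (hg n)).2⟩)
  have hbd : IsBoundedUnder (· ≥ ·) atTop g := isBoundedUnder_of ⟨-K, fun n => (abs_le.1 (hg n)).1⟩
  calc liminf g atTop ≤ liminf g (Filter.map p atTop) := liminf_le_liminf_of_le hten hbd hco
    _ = liminf (fun k => g (p k)) atTop := by
        rw [Filter.liminf, Filter.liminf, Filter.map_map]; rfl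

lemma simons_core [CompleteSpace X] {B : Set (X →L[ℝ] ℝ)} (hB : IsBoundary B)
    (y : ℕ → X) (M : ℝ) (hM : ∀ j, ‖y j‖ ≤ M)
    {a ε : ℝ} (hε : 0 < ε)
    (ha : ∀ v ∈ closure (convexHull ℝ (Set.range y)), a ≤ ‖v‖) :
    ∃ b ∈ B, a - 2*ε ≤ Filter.limsup (fun j => b (y j)) Filter.atTop := by
  set W : ℕ → Set X := fun k => closure (convexHull ℝ (y '' Set.Ici k)) with hWdef
  have hWconv : ∀ k, Convex ℝ (W k) := fun k => (convex_convexHull ℝ _).closure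
  have hWclosed : ∀ k, IsClosed (W k) := fun _ => isClosed_closure
  have hWy : ∀ k j, k ≤ j → y j ∈ W k := fun k j hkj =>
    subset_closure (subset_convexHull ℝ _ ⟨j, hkj, rfl⟩)
  have hWmono : ∀ k l, k ≤ l → W l ⊆ W k := fun k l hkl =>
    closure_mono (convexHull_mono (Set.image_mono (Set.Ici_subset_Ici.2 hkl)))
  have hWnorm : ∀ k, ∀ v ∈ W k, ‖v‖ ≤ M := by
    intro k
    apply auxHullNorm
    rintro z ⟨j, -, rfl⟩
    exact hM j
  -- near-minimizing choice
  have hpick : ∀ (h : X) (k : ℕ), ∃ u ∈ W k,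
      ∀ v ∈ W k, ‖h + (2:ℝ)⁻¹^(k+1) • u‖ ≤ ‖h + (2:ℝ)⁻¹^(k+1) • v‖ + ε * (4:ℝ)⁻¹^(k+1) := by
    intro h k
    set S := (fun v => ‖h + (2:ℝ)⁻¹^(k+1) • v‖) '' W k with hS
    have hSne : S.Nonempty := ⟨_, ⟨y k, hWy k k le_rfl, rfl⟩⟩
    have hSbdd : BddBelow S := ⟨0, by rintro r ⟨v, -, rfl⟩; exact norm_nonneg _⟩
    obtain ⟨r, ⟨u, huW, hu⟩, hr⟩ :=
      Real.lt_sInf_add_pos hSne (by positivity : (0:ℝ) < ε * (4:ℝ)⁻¹^(k+1))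
    refine ⟨u, huW, fun v hv => ?_⟩
    have hu' : ‖h + (2:ℝ)⁻¹^(k+1) • u‖ = r := hu
    rw [hu']
    exact le_trans hr.le (add_le_add (csInf_le hSbdd ⟨v, hv, rfl⟩) le_rfl)
  choose pick hpickW hpickMin using hpick
  obtain ⟨H, w, hH0, hw, hHrec⟩ : ∃ (H : ℕ → X) (w : ℕ → X), H 0 = 0 ∧
      (∀ k, w k = pick (H k) k) ∧ ∀ k, H (k+1) = H k + (2:ℝ)⁻¹^(k+1) • w k :=
    ⟨fun k => Nat.rec 0 (fun k hk => hk + (2:ℝ)⁻¹^(k+1) • pick hk k) k,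
     fun k => pick (Nat.rec 0 (fun k hk => hk + (2:ℝ)⁻¹^(k+1) • pick hk k) k) k,
     rfl, fun _ => rfl, fun _ => rfl⟩
  have hwW : ∀ k, w k ∈ W k := fun k => (hw k).symm ▸ hpickW (H k) k
  have hwMin : ∀ k, ∀ v ∈ W k, ‖H k + (2:ℝ)⁻¹^(k+1) • w k‖ ≤
      ‖H k + (2:ℝ)⁻¹^(k+1) • v‖ + ε * (4:ℝ)⁻¹^(k+1) := by
    intro k
    rw [hw k]
    exact hpickMin (H k) k
  have hwM : ∀ k, ‖w k‖ ≤ M := fun k => hWnorm k _ (hwW k)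
  set u : ℕ → X := fun k => ∑' i, (2:ℝ)⁻¹^(i+1) • w (k+i) with hudef
  have huW : ∀ k, u k ∈ W k := fun k =>
    auxTsumMem (hWconv k) (hWclosed k)
      (fun i => hWmono k (k+i) (Nat.le_add_right k i) (hwW (k+i))) (fun i => hwM (k+i))
  set T : X := ∑' j, (2:ℝ)⁻¹^(j+1) • w j with hTdef
  have hsumw : Summable (fun j => (2:ℝ)⁻¹^(j+1) • w j) := auxSummable hwM
  have hTu0 : T = u 0 := by
    rw [hTdef, hudef]
    exact tsum_congr fun i => by rw [zero_add]
  have hHsum : ∀ k, H k = ∑ j ∈ Finset.range k, (2:ℝ)⁻¹^(j+1) • w j := by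
    intro k
    induction k with
    | zero => simpa using hH0
    | succ n ih => rw [hHrec, ih, Finset.sum_range_succ]
  have hsplit : ∀ k, T = H k + (2:ℝ)⁻¹^k • u k := by
    intro k
    have h1 : (∑ j ∈ Finset.range k, (2:ℝ)⁻¹^(j+1) • w j)
        + ∑' i, (2:ℝ)⁻¹^((i+k)+1) • w (i+k) = T := Summable.sum_add_tsum_nat_add k hsumw
    have h2 : (2:ℝ)⁻¹^k • u k = ∑' i, (2:ℝ)⁻¹^((i+k)+1) • w (i+k) := by
      simp only [hudef]
      have hs : Summable (fun i => (2:ℝ)⁻¹^(i+1) • w (k+i)) :=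
        auxSummable (fun i => hwM (k+i))
      rw [← Summable.tsum_const_smul ((2:ℝ)⁻¹^k) hs]
      refine tsum_congr fun i => ?_
      rw [smul_smul, ← pow_add, show k + (i+1) = (i+k)+1 by omega, show k + i = i + k from Nat.add_comm k i]
    rw [hHsum k, h2]
    exact h1.symm
  have hM0 : 0 ≤ M := le_trans (norm_nonneg _) (hM 0)
  have hTW : T ∈ W 0 := hTu0 ▸ huW 0
  have haT : a ≤ ‖T‖ := by
    apply ha
    have him : y '' Set.Ici 0 = Set.range y := by
      ext z
      constructor
      · rintro ⟨j, -, rfl⟩; exact ⟨j, rfl⟩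
      · rintro ⟨j, rfl⟩; exact ⟨j, Nat.zero_le j, rfl⟩
    rw [← him]
    exact hTW
  have hkey : ∀ k, ‖H (k+1)‖ ≤ (‖H k‖ + ‖T‖)/2 + ε * (4:ℝ)⁻¹^(k+1) := by
    intro k
    have hvW : ((2:ℝ)⁻¹ • w k + (2:ℝ)⁻¹ • u (k+1)) ∈ W k := by
      have := hWconv k (hwW k) (hWmono k (k+1) (Nat.le_succ k) (huW (k+1)))
        (by norm_num : (0:ℝ) ≤ 2⁻¹) (by norm_num : (0:ℝ) ≤ 2⁻¹) (by norm_num)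
      exact this
    have h1 := hwMin k _ hvW
    have h2 : H k + (2:ℝ)⁻¹^(k+1) • ((2:ℝ)⁻¹ • w k + (2:ℝ)⁻¹ • u (k+1))
        = (2:ℝ)⁻¹ • H k + (2:ℝ)⁻¹ • T := by
      rw [hsplit (k+1), hHrec k]
      rw [pow_succ]
      module
    calc ‖H (k+1)‖ = ‖H k + (2:ℝ)⁻¹^(k+1) • w k‖ := by rw [hHrec]
      _ ≤ ‖H k + (2:ℝ)⁻¹^(k+1) • ((2:ℝ)⁻¹ • w k + (2:ℝ)⁻¹ • u (k+1))‖ + ε * (4:ℝ)⁻¹^(k+1) := h1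
      _ = ‖(2:ℝ)⁻¹ • H k + (2:ℝ)⁻¹ • T‖ + ε * (4:ℝ)⁻¹^(k+1) := by rw [h2]
      _ ≤ (‖H k‖ + ‖T‖)/2 + ε * (4:ℝ)⁻¹^(k+1) := by
          have h3 := norm_add_le ((2:ℝ)⁻¹ • H k) ((2:ℝ)⁻¹ • T)
          rw [norm_smul, norm_smul] at h3
          simp only [Real.norm_eq_abs] at h3
          rw [abs_of_nonneg (by norm_num : (0:ℝ) ≤ 2⁻¹)] at h3
          linarith
  have hclaim : ∀ k, (2:ℝ)⁻¹^k * a - ((2:ℝ)⁻¹^k - (4:ℝ)⁻¹^k) * ε ≤ ‖T‖ - ‖H k‖ := by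
    intro k
    induction k with
    | zero => simp only [pow_zero, hH0, norm_zero]; linarith
    | succ k ih =>
      have hk := hkey k
      have e1 : (2:ℝ)⁻¹^(k+1) = (2:ℝ)⁻¹^k / 2 := by rw [pow_succ]; ring
      have e2 : (4:ℝ)⁻¹^(k+1) = (4:ℝ)⁻¹^k / 4 := by rw [pow_succ]; ring
      rw [e1, e2]
      rw [e2] at hk
      linarith
  obtain ⟨b, hbB, hbT⟩ := hB.2 T
  have hbn : ‖b‖ = 1 := hB.1 b hbB
  have hbu : ∀ k, a - ε ≤ b (u k) := by
    intro k
    have h1 : b T = b (H k) + (2:ℝ)⁻¹^k * b (u k) := by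
      rw [hsplit k, map_add, map_smul, smul_eq_mul]
    have h2 : b (H k) ≤ ‖H k‖ := by
      calc b (H k) ≤ |b (H k)| := le_abs_self _
        _ = ‖b (H k)‖ := (Real.norm_eq_abs _).symm
        _ ≤ ‖b‖ * ‖H k‖ := b.le_opNorm _
        _ = ‖H k‖ := by rw [hbn, one_mul]
    have h3 : (2:ℝ)⁻¹^k * (a - ε) ≤ (2:ℝ)⁻¹^k * b (u k) := by
      have h4 := hclaim k
      have h5 : (0:ℝ) ≤ (4:ℝ)⁻¹^k := by positivity
      nlinarith [hε.le]
    exact le_of_mul_le_mul_left h3 (by positivity)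
  refine ⟨b, hbB, ?_⟩
  have hbdd : IsBoundedUnder (· ≤ ·) atTop (fun j => b (y j)) := by
    apply isBoundedUnder_of
    refine ⟨M, fun j => ?_⟩
    calc b (y j) ≤ |b (y j)| := le_abs_self _
      _ = ‖b (y j)‖ := (Real.norm_eq_abs _).symm
      _ ≤ ‖b‖ * ‖y j‖ := b.le_opNorm _
      _ ≤ 1 * M := by rw [hbn]; simpa using hM j
      _ = M := one_mul M
  apply le_limsup_of_frequently_le _ hbdd
  rw [Filter.frequently_atTop]
  intro k
  by_contra hcon
  push_neg at hcon
  have hle : ∀ v ∈ W k, b v ≤ a - 2*ε := by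
    apply auxHullLe
    rintro z ⟨j, hj, rfl⟩
    exact (hcon j hj).le
  have h6 := hle (u k) (huW k)
  have h7 := hbu k
  linarith

theorem stmt10 [CompleteSpace X] (B : Set (X →L[ℝ] ℝ)) (hB : IsBoundary B)
    (x : ℕ → X) (hx : BoundedSeq x) :
    deltaD B x = delta x := by
  obtain ⟨C, hC⟩ := hx
  have hC0 : (0:ℝ) ≤ C := le_trans (norm_nonneg _) (hC 0)
  obtain ⟨b₀, hb₀B, -⟩ := hB.2 0
  have habs : ∀ (f : X →L[ℝ] ℝ), ‖f‖ ≤ 1 → ∀ n, |f (x n)| ≤ C :=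
    fun f hf n => auxAbs hf (hC n)
  have hBound : ∀ (f : X →L[ℝ] ℝ), ‖f‖ ≤ 1 →
      limsup (fun n => f (x n)) atTop - liminf (fun n => f (x n)) atTop ≤ 2*C := by
    intro f hf
    have h1 : limsup (fun n => f (x n)) atTop ≤ C :=
      limsup_le_of_le
        (IsBoundedUnder.isCoboundedUnder_le
          (isBoundedUnder_of ⟨-C, fun n => (abs_le.1 (habs f hf n)).1⟩))
        (Eventually.of_forall fun n => (abs_le.1 (habs f hf n)).2)
    have h2 : -C ≤ liminf (fun n => f (x n)) atTop :=
      le_liminf_of_le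
        (IsBoundedUnder.isCoboundedUnder_ge
          (isBoundedUnder_of ⟨C, fun n => (abs_le.1 (habs f hf n)).2⟩))
        (Eventually.of_forall fun n => (abs_le.1 (habs f hf n)).1)
    linarith
  have hBddBall : BddAbove {r : ℝ | ∃ f ∈ {f : X →L[ℝ] ℝ | ‖f‖ ≤ 1},
      r = limsup (fun n => f (x n)) atTop - liminf (fun n => f (x n)) atTop} := by
    refine ⟨2*C, ?_⟩
    rintro r ⟨f, hf, rfl⟩
    exact hBound f hf
  have hsub : {r : ℝ | ∃ f ∈ B,
        r = limsup (fun n => f (x n)) atTop - liminf (fun n => f (x n)) atTop}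
      ⊆ {r : ℝ | ∃ f ∈ {f : X →L[ℝ] ℝ | ‖f‖ ≤ 1},
        r = limsup (fun n => f (x n)) atTop - liminf (fun n => f (x n)) atTop} := by
    rintro r ⟨b, hbB, rfl⟩
    exact ⟨b, le_of_eq (hB.1 b hbB), rfl⟩
  have hneB : Set.Nonempty {r : ℝ | ∃ f ∈ B,
      r = limsup (fun n => f (x n)) atTop - liminf (fun n => f (x n)) atTop} :=
    ⟨_, b₀, hb₀B, rfl⟩
  have hBddB : BddAbove {r : ℝ | ∃ f ∈ B,
      r = limsup (fun n => f (x n)) atTop - liminf (fun n => f (x n)) atTop} :=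
    hBddBall.mono hsub
  rw [delta, deltaD, deltaD]
  apply le_antisymm
  · exact csSup_le_csSup hBddBall hneB hsub
  · refine csSup_le (hneB.mono hsub) ?_
    rintro r ⟨f, hf, rfl⟩
    have hf1 : ‖f‖ ≤ 1 := hf
    refine le_of_forall_pos_le_add fun ε hε => ?_
    have he0 : 0 < ε/4 := by positivity
    set L1 := limsup (fun n => f (x n)) atTop with hL1
    set L2 := liminf (fun n => f (x n)) atTop with hL2
    have hbu : IsBoundedUnder (· ≤ ·) atTop (fun n => f (x n)) :=
      isBoundedUnder_of ⟨C, fun n => (abs_le.1 (habs f hf1 n)).2⟩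
    have hbl : IsBoundedUnder (· ≥ ·) atTop (fun n => f (x n)) :=
      isBoundedUnder_of ⟨-C, fun n => (abs_le.1 (habs f hf1 n)).1⟩
    have hfr1 : ∃ᶠ n in atTop, L1 - ε/4 < f (x n) :=
      frequently_lt_of_lt_limsup (IsBoundedUnder.isCoboundedUnder_le hbl) (by linarith)
    have hfr2 : ∃ᶠ n in atTop, f (x n) < L2 + ε/4 :=
      frequently_lt_of_liminf_lt (IsBoundedUnder.isCoboundedUnder_ge hbu) (by linarith)
    choose p hpk hpv using fun k => frequently_atTop.1 hfr1 k
    choose q hqk hqv using fun k => frequently_atTop.1 hfr2 k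
    set y : ℕ → X := fun k => x (p k) - x (q k) with hy
    have hyM : ∀ k, ‖y k‖ ≤ C + C := fun k =>
      le_trans (norm_sub_le _ _) (add_le_add (hC _) (hC _))
    have hfy : ∀ k, L1 - L2 - 2*(ε/4) ≤ f (y k) := by
      intro k
      have h1 := hpv k
      have h2 := hqv k
      simp only [hy, map_sub]
      linarith
    have hahull : ∀ v ∈ closure (convexHull ℝ (Set.range y)), L1 - L2 - 2*(ε/4) ≤ ‖v‖ := by
      intro v hv
      have h1 : L1 - L2 - 2*(ε/4) ≤ f v := by
        refine auxHullGe ?_ v hv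
        rintro z ⟨k, rfl⟩
        exact hfy k
      have h2 : f v ≤ ‖v‖ := by
        calc f v ≤ |f v| := le_abs_self _
          _ ≤ ‖v‖ := auxAbs hf1 le_rfl
      linarith
    obtain ⟨b, hbB, hblim⟩ := simons_core hB y (C+C) hyM he0 hahull
    have hb1 : ‖b‖ ≤ 1 := le_of_eq (hB.1 b hbB)
    have habsb : ∀ n, |b (x n)| ≤ C := fun n => auxAbs hb1 (hC n)
    have hcomp : limsup (fun k => b (y k)) atTop ≤
        limsup (fun n => b (x n)) atTop - liminf (fun n => b (x n)) atTop := by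
      have h1 : limsup (fun k => b (y k)) atTop ≤
          limsup (fun k => b (x (p k))) atTop - liminf (fun k => b (x (q k))) atTop := by
        have h0 := auxLimsupSub (u := fun k => b (x (p k))) (v := fun k => b (x (q k)))
          (K := C) (fun k => habsb _) (fun k => habsb _)
        have hyb : (fun k => b (y k)) = fun k => b (x (p k)) - b (x (q k)) := by
          funext k
          simp [hy, map_sub]
        rw [hyb]
        exact h0
      have h2 := auxLimsupComp (K := C) habsb hpk
      have h3 := auxLiminfComp (K := C) habsb hqk
      linarith
    have hmem : limsup (fun n => b (x n)) atTop - liminf (fun n => b (x n)) atTop ≤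
        sSup {r : ℝ | ∃ f ∈ B,
          r = limsup (fun n => f (x n)) atTop - liminf (fun n => f (x n)) atTop} :=
      le_csSup hBddB ⟨b, hbB, rfl⟩
    have hfinal : L1 - L2 - 4*(ε/4) ≤ limsup (fun n => b (x n)) atTop
        - liminf (fun n => b (x n)) atTop := by linarith
    calc L1 - L2 ≤ limsup (fun n => b (x n)) atTop - liminf (fun n => b (x n)) atTop + ε := by
          linarith
      _ ≤ sSup {r : ℝ | ∃ f ∈ B,
          r = limsup (fun n => f (x n)) atTop - liminf (fun n => f (x n)) atTop} + ε := by
          linarith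
end

section
/- Simons' equality: if B is a boundary for the real Banach space X, then for every bounded sequence (x_n) in X, sup_{b∈B} limsup_n b(x_n) = sup_{‖x*‖≤1} limsup_n x*(x_n). -/
open Filter Topology

variable {X : Type*} [NormedAddCommGroup X] [NormedSpace ℝ X]

/-- admissible coefficient sequence at level `n` -/
def SimAdm (n : ℕ) (l : ℕ → ℝ) : Prop :=
  (∀ k, 0 ≤ l k) ∧ Summable l ∧ (∑' k, l k) = 1 ∧ ∀ k < n, l k = 0

lemma SimAdm.mono {n m : ℕ} (h : n ≤ m) {l : ℕ → ℝ} (hl : SimAdm m l) : SimAdm n l :=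
  ⟨hl.1, hl.2.1, hl.2.2.1, fun k hk => hl.2.2.2 k (lt_of_lt_of_le hk h)⟩

lemma simAdm_single (n : ℕ) : SimAdm n (fun k => if k = n then (1:ℝ) else 0) := by
  refine ⟨fun k => by positivity, ⟨1, hasSum_ite_eq n 1⟩, tsum_ite_eq n 1, fun k hk => ?_⟩
  simp [Nat.ne_of_lt hk]

lemma sim_summable_smul {y : ℕ → X} {M : ℝ} (hy : ∀ k, ‖y k‖ ≤ M) {l : ℕ → ℝ}
    (h0 : ∀ k, 0 ≤ l k) (hs : Summable l) [CompleteSpace X] :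
    Summable (fun k => l k • y k) := by
  refine Summable.of_norm_bounded (hs.mul_right M) (fun k => ?_)
  rw [norm_smul, Real.norm_eq_abs, abs_of_nonneg (h0 k)]
  exact mul_le_mul_of_nonneg_left (hy k) (h0 k)

lemma sim_norm_tsum_le {y : ℕ → X} {M : ℝ} (hy : ∀ k, ‖y k‖ ≤ M) {l : ℕ → ℝ}
    (h0 : ∀ k, 0 ≤ l k) (hs : Summable l) (h1 : (∑' k, l k) = 1) [CompleteSpace X] :
    ‖∑' k, l k • y k‖ ≤ M := by
  have hb : ∀ k, ‖l k • y k‖ ≤ l k * M := fun k => by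
    rw [norm_smul, Real.norm_eq_abs, abs_of_nonneg (h0 k)]
    exact mul_le_mul_of_nonneg_left (hy k) (h0 k)
  have hsn : Summable (fun k => ‖l k • y k‖) :=
    Summable.of_nonneg_of_le (fun k => norm_nonneg _) hb (hs.mul_right M)
  calc ‖∑' k, l k • y k‖ ≤ ∑' k, ‖l k • y k‖ := norm_tsum_le_tsum_norm hsn
    _ ≤ ∑' k, l k * M := Summable.tsum_le_tsum hb hsn (hs.mul_right M)
    _ = M := by rw [tsum_mul_right, h1, one_mul]

lemma sim_pairing (b : X →L[ℝ] ℝ) {y : ℕ → X} {l : ℕ → ℝ}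
    (hs : Summable fun k => l k • y k) :
    b (∑' k, l k • y k) = ∑' k, l k * b (y k) := by
  rw [b.map_tsum hs]
  simp [smul_eq_mul]

lemma sim_tsum_le {l t : ℕ → ℝ} {M S : ℝ}
    (h0 : ∀ k, 0 ≤ l k) (hs : Summable l) (h1 : (∑' k, l k) = 1)
    (hb : ∀ k, |t k| ≤ M) (hS : ∀ k, l k ≠ 0 → t k ≤ S) :
    ∑' k, l k * t k ≤ S := by
  have hsum : Summable (fun k => l k * t k) := by
    refine Summable.of_norm_bounded (hs.mul_right M) (fun k => ?_)
    rw [Real.norm_eq_abs, abs_mul, abs_of_nonneg (h0 k)]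
    exact mul_le_mul_of_nonneg_left (hb k) (h0 k)
  calc ∑' k, l k * t k ≤ ∑' k, l k * S := by
        refine Summable.tsum_le_tsum (fun k => ?_) hsum (hs.mul_right S)
        rcases eq_or_ne (l k) 0 with h | h
        · simp [h]
        · exact mul_le_mul_of_nonneg_left (hS k h) (h0 k)
    _ = S := by rw [tsum_mul_right, h1, one_mul]

lemma sim_le_tsum {l t : ℕ → ℝ} {M S : ℝ}
    (h0 : ∀ k, 0 ≤ l k) (hs : Summable l) (h1 : (∑' k, l k) = 1)
    (hb : ∀ k, |t k| ≤ M) (hS : ∀ k, l k ≠ 0 → S ≤ t k) :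
    S ≤ ∑' k, l k * t k := by
  have := sim_tsum_le (t := fun k => -t k) (M := M) (S := -S) h0 hs h1
    (fun k => by simpa using hb k) (fun k hk => by simpa using hS k hk)
  simp only [mul_neg] at this
  rw [tsum_neg] at this
  linarith


lemma sim_sigma [CompleteSpace X] {y : ℕ → X} {M : ℝ} (hy : ∀ k, ‖y k‖ ≤ M)
    {w : ℕ → ℝ} (hw0 : ∀ j, 0 ≤ w j) (hws : Summable w) (hw1 : (∑' j, w j) = 1)
    {n : ℕ} {c : ℕ → ℕ → ℝ} (hc : ∀ j, SimAdm n (c j)) :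
    SimAdm n (fun k => ∑' j, w j * c j k) ∧
      (∑' k, (∑' j, w j * c j k) • y k) = ∑' j, w j • (∑' k, c j k • y k) := by
  set g : ℕ × ℕ → ℝ := fun p => w p.1 * c p.1 p.2 with hg
  have hg0 : ∀ p, 0 ≤ g p := fun p => mul_nonneg (hw0 _) ((hc p.1).1 _)
  have hrow : ∀ j, Summable (fun k => g (j, k)) := fun j => ((hc j).2.1).mul_left (w j)
  have hrowsum : ∀ j, (∑' k, g (j, k)) = w j := fun j => by
    simp only [hg]; rw [tsum_mul_left, (hc j).2.2.1, mul_one]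
  have hgsum : Summable g := by
    rw [summable_prod_of_nonneg hg0]
    exact ⟨hrow, by simpa only [hrowsum] using hws⟩
  have hcol : ∀ k, Summable (fun j => g (j, k)) := by
    intro k
    refine Summable.of_nonneg_of_le (fun j => hg0 _) (fun j => ?_) hws
    have h1 : c j k ≤ 1 := by
      have := Summable.le_tsum ((hc j).2.1) k (fun m _ => (hc j).1 m)
      rw [(hc j).2.2.1] at this; exact this
    calc w j * c j k ≤ w j * 1 := mul_le_mul_of_nonneg_left h1 (hw0 j)
      _ = w j := mul_one _
  have hgsum' : Summable (fun p : ℕ × ℕ => g p.swap) := hgsum.prod_symm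
  -- Summability of the combined coefficients
  have hLsum : Summable (fun k => ∑' j, g (j, k)) := by
    have := (summable_prod_of_nonneg (fun p : ℕ × ℕ => hg0 p.swap)).mp hgsum'
    exact this.2
  have hL0 : ∀ k, 0 ≤ ∑' j, g (j, k) := fun k => tsum_nonneg (fun j => hg0 _)
  have hcomm : (∑' k, ∑' j, g (j, k)) = ∑' j, ∑' k, g (j, k) :=
    Summable.tsum_comm' hgsum hrow hcol
  have hL1 : (∑' k, ∑' j, g (j, k)) = 1 := by
    rw [hcomm]; simpa only [hrowsum] using hw1
  have hLsupp : ∀ k < n, (∑' j, g (j, k)) = 0 := by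
    intro k hk
    have : ∀ j, g (j, k) = 0 := fun j => by
      simp only [hg]; rw [(hc j).2.2.2 k hk, mul_zero]
    simp [this]
  refine ⟨⟨hL0, hLsum, hL1, hLsupp⟩, ?_⟩
  -- vector identity
  set F : ℕ × ℕ → X := fun p => g p • y p.2 with hF
  have hFsum : Summable F := by
    refine Summable.of_norm_bounded (hgsum.mul_right M) (fun p => ?_)
    rw [norm_smul, Real.norm_eq_abs, abs_of_nonneg (hg0 p)]
    exact mul_le_mul_of_nonneg_left (hy p.2) (hg0 p)
  have hFrow : ∀ j, Summable (fun k => F (j, k)) := fun j =>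
    sim_summable_smul hy (fun k => hg0 (j, k)) (hrow j)
  have hFcol : ∀ k, Summable (fun j => F (j, k)) := by
    intro k
    refine Summable.of_norm_bounded ((hcol k).mul_right M) (fun j => ?_)
    rw [norm_smul, Real.norm_eq_abs, abs_of_nonneg (hg0 (j, k))]
    exact mul_le_mul_of_nonneg_left (hy k) (hg0 (j, k))
  calc (∑' k, (∑' j, g (j, k)) • y k) = ∑' k, ∑' j, F (j, k) := by
        refine tsum_congr (fun k => ?_)
        exact (Summable.tsum_smul_const (hcol k) (y k)).symm
    _ = ∑' j, ∑' k, F (j, k) := Summable.tsum_comm' hFsum hFrow hFcol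
    _ = ∑' j, w j • (∑' k, c j k • y k) := by
        refine tsum_congr (fun j => ?_)
        rw [← Summable.tsum_const_smul (w j) (sim_summable_smul hy (hc j).1 (hc j).2.1)]
        refine tsum_congr (fun k => ?_)
        simp only [hF, hg, smul_smul]


/-- Simons' inequality, vector form. -/
lemma simons_aux [CompleteSpace X] {y : ℕ → X} {M : ℝ} (hy : ∀ k, ‖y k‖ ≤ M)
    {B : Set (X →L[ℝ] ℝ)} (hB : IsBoundary B) {d ε : ℝ} (hε : 0 < ε)
    (hd : ∀ l : ℕ → ℝ, SimAdm 0 l → d ≤ ‖∑' k, l k • y k‖) :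
    ∃ b ∈ B, d - ε ≤ Filter.limsup (fun k => b (y k)) Filter.atTop := by
  have hM0 : 0 ≤ M := le_trans (norm_nonneg (y 0)) (hy 0)
  set W : ℕ → ℝ := fun n => (1/2 : ℝ) ^ (n + 1) with hWdef
  have hW0 : ∀ n, (0:ℝ) < W n := fun n => by positivity
  have hWs : Summable W := by
    have := summable_geometric_two.mul_right (1/2 : ℝ)
    simpa [hWdef, pow_succ] using this
  have hW1 : (∑' n, W n) = 1 := by
    have : (∑' n : ℕ, (1/2:ℝ) ^ n * (1/2)) = 1 := by
      rw [tsum_mul_right, tsum_geometric_two]; norm_num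
    simpa [hWdef, pow_succ] using this
  -- the near-minimizing choice
  have key : ∀ (n : ℕ) (P : X), ∃ l, SimAdm n l ∧ ∀ l', SimAdm n l' →
      ‖P + W n • ∑' k, l k • y k‖ ≤ ‖P + W n • ∑' k, l' k • y k‖ + ε * (1/4) ^ (n+1) := by
    intro n P
    set S : Set ℝ := {r | ∃ l, SimAdm n l ∧ r = ‖P + W n • ∑' k, l k • y k‖} with hS
    have hne : S.Nonempty := ⟨_, ⟨_, simAdm_single n, rfl⟩⟩
    have hbd : BddBelow S := ⟨0, by rintro r ⟨l, -, rfl⟩; positivity⟩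
    have hpos : (0:ℝ) < ε * (1/4) ^ (n+1) := by positivity
    obtain ⟨r, ⟨l, hl, rfl⟩, hr⟩ := exists_lt_of_csInf_lt hne (by linarith : sInf S < sInf S + ε * (1/4) ^ (n+1))
    refine ⟨l, hl, fun l' hl' => le_trans hr.le ?_⟩
    have : sInf S ≤ ‖P + W n • ∑' k, l' k • y k‖ := csInf_le hbd ⟨l', hl', rfl⟩
    linarith
  choose lam hlamAdm hlamMin using key
  set P : ℕ → X := fun n => Nat.rec (0 : X)
      (fun m Pm => Pm + W m • ∑' k, lam m Pm k • y k) n with hPdef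
  have hP0 : P 0 = 0 := rfl
  set c : ℕ → ℕ → ℝ := fun n => lam n (P n) with hcdef
  set v : ℕ → X := fun n => ∑' k, c n k • y k with hvdef
  have hPs : ∀ n, P (n+1) = P n + W n • v n := fun n => rfl
  have hcAdm : ∀ n, SimAdm n (c n) := fun n => hlamAdm n (P n)
  have hvnorm : ∀ n, ‖v n‖ ≤ M := fun n =>
    sim_norm_tsum_le hy (hcAdm n).1 (hcAdm n).2.1 (hcAdm n).2.2.1
  have hvsum : ∀ m : ℕ, Summable (fun j => W j • v (j + m)) := by
    intro m
    refine Summable.of_norm_bounded (hWs.mul_right M) (fun j => ?_)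
    rw [norm_smul, Real.norm_eq_abs, abs_of_pos (hW0 j)]
    exact mul_le_mul_of_nonneg_left (hvnorm _) (hW0 j).le
  set Q : ℕ → X := fun m => ∑' j, W j • v (j + m) with hQdef
  -- admissible representation of each Q m
  have hQrep : ∀ m, ∃ q, SimAdm m q ∧ (∑' k, q k • y k) = Q m := by
    intro m
    have hc' : ∀ j, SimAdm m (c (j + m)) := fun j =>
      (hcAdm (j + m)).mono (Nat.le_add_left m j)
    obtain ⟨hAdm, hEq⟩ := sim_sigma hy (fun j => (hW0 j).le) hWs hW1 hc'
    exact ⟨_, hAdm, hEq⟩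
  choose q hqAdm hqEq using hQrep
  have hdQ : d ≤ ‖Q 0‖ := by rw [← hqEq 0]; exact hd _ (hqAdm 0)
  -- splitting identity
  have hPsum : ∀ n, P n = ∑ j ∈ Finset.range n, W j • v j := by
    intro n
    induction n with
    | zero => simp [hP0]
    | succ n ih => rw [hPs n, ih, Finset.sum_range_succ]
  have hQ0 : Q 0 = ∑' j, W j • v j := by
    simp only [hQdef]
    exact tsum_congr (fun j => by rw [Nat.add_zero])
  have hvs0 : Summable (fun j => W j • v j) := by
    have := hvsum 0
    simpa using this
  have hsplit : ∀ n, Q 0 = P n + (1/2:ℝ)^n • Q n := by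
    intro n
    have h1 : (∑ j ∈ Finset.range n, W j • v j) + (∑' j, W (j + n) • v (j + n))
        = ∑' j, W j • v j := Summable.sum_add_tsum_nat_add n hvs0
    have h2 : ∀ j : ℕ, W (j + n) • v (j + n) = (1/2:ℝ)^n • (W j • v (j + n)) := by
      intro j
      rw [smul_smul]
      congr 1
      simp only [hWdef]
      ring
    have h3 : (∑' j, W (j + n) • v (j + n)) = (1/2:ℝ)^n • Q n := by
      rw [tsum_congr h2, Summable.tsum_const_smul _ (hvsum n)]
    rw [hQ0, ← h1, h3, hPsum n]
  -- key recursion inequality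
  have hrec : ∀ n, ‖P (n+1)‖ ≤ (1/2) * ‖P n‖ + (1/2) * ‖Q 0‖ + ε * (1/4)^(n+1) := by
    intro n
    have hcs := (hcAdm n).2.1
    have hqs := (hqAdm (n+1)).2.1
    have huAdm : SimAdm n (fun k => (c n k + q (n+1) k) / 2) := by
      refine ⟨fun k => div_nonneg (add_nonneg ((hcAdm n).1 k) ((hqAdm (n+1)).1 k)) (by norm_num),
        (hcs.add hqs).div_const 2, ?_, ?_⟩
      · have h2 : (∑' k, (c n k + q (n+1) k)) = 2 := by
          rw [Summable.tsum_add hcs hqs, (hcAdm n).2.2.1, (hqAdm (n+1)).2.2.1]; norm_num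
        have h3 : (∑' k, (c n k + q (n+1) k) / 2) = (∑' k, (c n k + q (n+1) k) * (1/2)) :=
          tsum_congr (fun k => by ring)
        rw [h3, tsum_mul_right, h2]; norm_num
      · intro k hk
        show (c n k + q (n+1) k) / 2 = 0
        rw [(hcAdm n).2.2.2 k hk, ((hqAdm (n+1)).mono (Nat.le_succ n)).2.2.2 k hk]
        norm_num
    have hcv : Summable (fun k => c n k • y k) := sim_summable_smul hy (hcAdm n).1 hcs
    have hqv : Summable (fun k => q (n+1) k • y k) := sim_summable_smul hy (hqAdm (n+1)).1 hqs
    have hveq : (∑' k, ((c n k + q (n+1) k) / 2) • y k) = (2⁻¹:ℝ) • (v n + Q (n+1)) := by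
      have h1 : ∀ k : ℕ, ((c n k + q (n+1) k) / 2) • y k
          = (2⁻¹:ℝ) • (c n k • y k) + (2⁻¹:ℝ) • (q (n+1) k • y k) := by
        intro k
        rw [← smul_add, ← add_smul, smul_smul]
        congr 1
        ring
      rw [tsum_congr h1, Summable.tsum_add ((hcv.const_smul _)) ((hqv.const_smul _)),
        Summable.tsum_const_smul _ hcv, Summable.tsum_const_smul _ hqv, ← smul_add, ← hqEq (n+1)]
    have hmin := hlamMin n (P n) _ huAdm
    rw [hveq] at hmin
    have hiden : P n + W n • ((2⁻¹:ℝ) • (v n + Q (n+1))) = (2⁻¹:ℝ) • (P n + Q 0) := by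
      rw [hsplit (n+1), hPs n]
      have : (1/2:ℝ)^(n+1) = W n := rfl
      rw [← this]
      module
    rw [hiden] at hmin
    have hPn1 : P (n+1) = P n + W n • ∑' k, lam n (P n) k • y k := hPs n
    calc ‖P (n+1)‖ ≤ ‖(2⁻¹:ℝ) • (P n + Q 0)‖ + ε * (1/4)^(n+1) := hmin
      _ ≤ (1/2) * ‖P n‖ + (1/2) * ‖Q 0‖ + ε * (1/4)^(n+1) := by
          rw [norm_smul]
          have := norm_add_le (P n) (Q 0)
          simp only [Real.norm_eq_abs]
          rw [abs_of_pos (by norm_num : (0:ℝ) < (2⁻¹:ℝ))]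
          nlinarith [norm_nonneg (P n + Q 0)]
  have hPbound : ∀ n, ‖P n‖ ≤ (1 - (1/2:ℝ)^n) * ‖Q 0‖ + ε * ((1/2)^n - (1/4)^n) := by
    intro n
    induction n with
    | zero => simp [hP0]
    | succ n ih =>
        have h := hrec n
        rw [pow_succ (1/2:ℝ) n, pow_succ (1/4:ℝ) n] at *
        nlinarith [pow_nonneg (by norm_num : (0:ℝ) ≤ 1/4) n]
  -- endgame
  obtain ⟨b, hbB, hbG⟩ := hB.2 (Q 0)
  have hbnorm : ‖b‖ = 1 := hB.1 b hbB
  have hble : ∀ z : X, b z ≤ ‖z‖ := by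
    intro z
    calc b z ≤ |b z| := le_abs_self _
      _ ≤ ‖b‖ * ‖z‖ := b.le_opNorm z
      _ = ‖z‖ := by rw [hbnorm, one_mul]
  have hQb : ∀ n, ‖Q 0‖ - ε ≤ b (Q n) := by
    intro n
    have h1 : b (Q 0) = b (P n) + (1/2:ℝ)^n * b (Q n) := by
      rw [hsplit n]; rw [map_add, map_smul]; rfl
    have h2 : b (P n) ≤ ‖P n‖ := hble _
    have h3 := hPbound n
    have h4 : (0:ℝ) < (1/2:ℝ)^n := by positivity
    have h5 : (0:ℝ) ≤ (1/4:ℝ)^n := by positivity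
    have h6 : (1/2:ℝ)^n * (‖Q 0‖ - ε) ≤ (1/2:ℝ)^n * b (Q n) := by
      rw [hbG] at h1
      nlinarith
    exact le_of_mul_le_mul_left h6 h4
  have hbybdd : ∀ k, |b (y k)| ≤ M := by
    intro k
    calc |b (y k)| ≤ ‖b‖ * ‖y k‖ := b.le_opNorm _
      _ ≤ M := by rw [hbnorm, one_mul]; exact hy k
  have hfreq : ∀ δ : ℝ, 0 < δ → ∃ᶠ k in Filter.atTop, d - ε - δ ≤ b (y k) := by
    intro δ hδ
    rw [Filter.frequently_atTop]
    intro n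
    by_contra hcon
    push_neg at hcon
    have hpair : b (Q n) = ∑' k, q n k * b (y k) := by
      rw [← hqEq n]
      exact sim_pairing b (sim_summable_smul hy (hqAdm n).1 (hqAdm n).2.1)
    have hub : b (Q n) ≤ d - ε - δ := by
      rw [hpair]
      refine sim_tsum_le (hqAdm n).1 (hqAdm n).2.1 (hqAdm n).2.2.1 hbybdd ?_
      intro k hk
      have hkn : n ≤ k := by
        by_contra hlt
        exact hk ((hqAdm n).2.2.2 k (not_le.mp hlt))
      exact (hcon k hkn).le
    have := hQb n
    linarith
  have hbdd : Filter.IsBoundedUnder (· ≤ ·) Filter.atTop (fun k => b (y k)) :=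
    Filter.isBoundedUnder_of ⟨M, fun k => le_trans (le_abs_self _) (hbybdd k)⟩
  refine ⟨b, hbB, ?_⟩
  refine le_of_forall_pos_le_add (fun δ hδ => ?_)
  have := Filter.le_limsup_of_frequently_le (hfreq δ hδ) hbdd
  linarith


theorem stmt11 [CompleteSpace X] (B : Set (X →L[ℝ] ℝ)) (hB : IsBoundary B)
    (x : ℕ → X) (hx : BoundedSeq x) :
    sSup {r : ℝ | ∃ b ∈ B, r = Filter.limsup (fun n => b (x n)) Filter.atTop}
      = sSup {r : ℝ | ∃ f : X →L[ℝ] ℝ, ‖f‖ ≤ 1 ∧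
          r = Filter.limsup (fun n => f (x n)) Filter.atTop} := by
  obtain ⟨C0, hC0⟩ := hx
  set C : ℝ := max C0 0 with hCdef
  have hC : ∀ n, ‖x n‖ ≤ C := fun n => le_trans (hC0 n) (le_max_left _ _)
  have hCpos : 0 ≤ C := le_max_right _ _
  set A : Set ℝ := {r : ℝ | ∃ b ∈ B, r = Filter.limsup (fun n => b (x n)) Filter.atTop} with hA
  set D : Set ℝ := {r : ℝ | ∃ f : X →L[ℝ] ℝ, ‖f‖ ≤ 1 ∧
      r = Filter.limsup (fun n => f (x n)) Filter.atTop} with hD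
  -- pointwise bounds
  have habs : ∀ (f : X →L[ℝ] ℝ), ‖f‖ ≤ 1 → ∀ n, |f (x n)| ≤ C := by
    intro f hf n
    calc |f (x n)| ≤ ‖f‖ * ‖x n‖ := f.le_opNorm _
      _ ≤ 1 * C := mul_le_mul hf (hC n) (norm_nonneg _) zero_le_one
      _ = C := one_mul _
  have hbddU : ∀ (f : X →L[ℝ] ℝ), ‖f‖ ≤ 1 →
      Filter.IsBoundedUnder (· ≤ ·) Filter.atTop (fun n => f (x n)) := fun f hf =>
    Filter.isBoundedUnder_of ⟨C, fun n => le_trans (le_abs_self _) (habs f hf n)⟩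
  have hcobdd : ∀ (f : X →L[ℝ] ℝ), ‖f‖ ≤ 1 →
      Filter.IsCoboundedUnder (· ≤ ·) Filter.atTop (fun n => f (x n)) := by
    intro f hf
    refine Filter.IsBoundedUnder.isCoboundedUnder_le
      (Filter.isBoundedUnder_of ⟨-C, fun n => neg_le_of_abs_le (habs f hf n)⟩)
  have hDbdd : ∀ r ∈ D, r ≤ C := by
    rintro r ⟨f, hf, rfl⟩
    refine Filter.limsup_le_of_le (hcobdd f hf) ?_
    exact Filter.Eventually.of_forall (fun n => le_trans (le_abs_self _) (habs f hf n))
  have hAsubD : A ⊆ D := by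
    rintro r ⟨b, hbB, rfl⟩
    exact ⟨b, le_of_eq (hB.1 b hbB), rfl⟩
  have hAne : A.Nonempty := by
    obtain ⟨b, hbB, -⟩ := hB.2 0
    exact ⟨_, b, hbB, rfl⟩
  have hDne : D.Nonempty := hAne.mono hAsubD
  have hDbddAbove : BddAbove D := ⟨C, hDbdd⟩
  have hAbddAbove : BddAbove A := hDbddAbove.mono hAsubD
  refine le_antisymm (csSup_le_csSup hDbddAbove hAne hAsubD) (csSup_le hDne ?_)
  rintro r ⟨f, hf, rfl⟩
  set L : ℝ := Filter.limsup (fun n => f (x n)) Filter.atTop with hL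
  refine le_of_forall_pos_le_add (fun ε hε => ?_)
  -- extract a subsequence on which f is near its limsup
  have hfreq : ∃ᶠ n in Filter.atTop, L - ε/4 < f (x n) :=
    Filter.frequently_lt_of_lt_limsup (hcobdd f hf) (by linarith)
  obtain ⟨φ, hφ, hφval⟩ := Filter.extraction_of_frequently_atTop hfreq
  set y : ℕ → X := fun k => x (φ k) with hy
  have hyC : ∀ k, ‖y k‖ ≤ C := fun k => hC _
  -- lower bound hypothesis for Simons' inequality
  have hd : ∀ l : ℕ → ℝ, SimAdm 0 l → L - ε/4 ≤ ‖∑' k, l k • y k‖ := by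
    intro l hl
    have hsm : Summable (fun k => l k • y k) := sim_summable_smul hyC hl.1 hl.2.1
    have h1 : f (∑' k, l k • y k) = ∑' k, l k * f (y k) := sim_pairing f hsm
    have h2 : L - ε/4 ≤ ∑' k, l k * f (y k) := by
      refine sim_le_tsum hl.1 hl.2.1 hl.2.2.1 (fun k => habs f hf (φ k)) ?_
      intro k _
      exact (hφval k).le
    have h3 : f (∑' k, l k • y k) ≤ ‖∑' k, l k • y k‖ := by
      calc f (∑' k, l k • y k) ≤ |f (∑' k, l k • y k)| := le_abs_self _
        _ ≤ ‖f‖ * ‖∑' k, l k • y k‖ := f.le_opNorm _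
        _ ≤ 1 * ‖∑' k, l k • y k‖ := mul_le_mul_of_nonneg_right hf (norm_nonneg _)
        _ = _ := one_mul _
    linarith
  obtain ⟨b, hbB, hblimsup⟩ := simons_aux hyC hB (by positivity : (0:ℝ) < ε/4) hd
  -- limsup along the subsequence is at most the limsup of the full sequence
  have hbnorm : ‖b‖ ≤ 1 := le_of_eq (hB.1 b hbB)
  have hmapeq : Filter.limsup (fun k => b (y k)) Filter.atTop
      = Filter.limsup (fun n => b (x n)) (Filter.map φ Filter.atTop) := by
    rw [Filter.limsup, Filter.limsup, Filter.map_map]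
    rfl
  have hsubseq : Filter.limsup (fun k => b (y k)) Filter.atTop
      ≤ Filter.limsup (fun n => b (x n)) Filter.atTop := by
    rw [hmapeq]
    refine Filter.limsup_le_limsup_of_le hφ.tendsto_atTop ?_ ?_
    · refine Filter.IsBoundedUnder.isCoboundedUnder_le ?_
      refine Filter.isBoundedUnder_of ⟨-C, fun n => neg_le_of_abs_le (habs b hbnorm n)⟩
    · exact hbddU b hbnorm
  have hmem : Filter.limsup (fun n => b (x n)) Filter.atTop ∈ A := ⟨b, hbB, rfl⟩
  have := le_csSup hAbddAbove hmem
  linarith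
end

section
/- Let B be a boundary for a real Banach space X. If a bounded sequence (x_n) is Cauchy in the topology σ(X,B) of pointwise convergence on B and is weakly Cauchy, and converges pointwise on B to some x ∈ X, then (x_n) converges weakly to x. -/
open Filter Topology

variable {X : Type*} [NormedAddCommGroup X] [NormedSpace ℝ X]

lemma simons_core_s12 [CompleteSpace X] (B : Set (X →L[ℝ] ℝ)) (hB : IsBoundary B)
    (z : ℕ → X) (C : ℝ) (hC : ∀ n, ‖z n‖ ≤ C)
    (r ε : ℝ) (hε : 0 < ε)
    (hr : ∀ w ∈ convexHull ℝ (Set.range z), r ≤ ‖w‖) :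
    ∃ b ∈ B, ∀ k : ℕ, ∃ n, k ≤ n ∧ r - ε < b (z n) := by
  classical
  obtain ⟨hB1, hB2⟩ := hB
  obtain ⟨b₀, hb₀B, -⟩ := hB2 0
  have hC0 : 0 ≤ C := le_trans (norm_nonneg _) (hC 0)
  -- the sup over B
  set S : X → ℝ := fun v => sSup ((fun b : X →L[ℝ] ℝ => b v) '' B) with hSdef
  have habs : ∀ (b : X →L[ℝ] ℝ), b ∈ B → ∀ v : X, |b v| ≤ ‖v‖ := by
    intro b hb v
    calc |b v| = ‖b v‖ := (Real.norm_eq_abs _).symm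
    _ ≤ ‖b‖ * ‖v‖ := b.le_opNorm v
    _ = ‖v‖ := by rw [hB1 b hb, one_mul]
  have hbddS : ∀ v : X, BddAbove ((fun b : X →L[ℝ] ℝ => b v) '' B) := by
    intro v
    refine ⟨‖v‖, ?_⟩
    rintro a ⟨b, hb, rfl⟩
    exact le_trans (le_abs_self _) (habs b hb v)
  have hSle : ∀ b ∈ B, ∀ v : X, b v ≤ S v := fun b hb v => le_csSup (hbddS v) ⟨b, hb, rfl⟩
  have hSnorm : ∀ v : X, S v ≤ ‖v‖ := by
    intro v
    refine csSup_le ⟨b₀ v, b₀, hb₀B, rfl⟩ ?_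
    rintro a ⟨b, hb, rfl⟩
    exact le_trans (le_abs_self _) (habs b hb v)
  have hSlow : ∀ v : X, -‖v‖ ≤ S v := by
    intro v
    refine le_trans ?_ (hSle b₀ hb₀B v)
    have := habs b₀ hb₀B v
    linarith [neg_abs_le (b₀ v)]
  -- geometric weights
  set t : ℕ → ℝ := fun k => (2⁻¹ : ℝ) ^ k with htdef
  have ht_pos : ∀ k, 0 < t k := fun k => pow_pos (by norm_num) k
  have ht_succ : ∀ k, t (k + 1) = t k * 2⁻¹ := fun k => pow_succ _ _
  have htpow : ∀ k, t k = (2⁻¹ : ℝ) ^ k := fun _ => rfl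
  have ht_lt : ∀ k m, k < m → t m < t k := fun k m h =>
    pow_lt_pow_right_of_lt_one₀ (by norm_num) (by norm_num) h
  -- convex hulls of tails
  set K : ℕ → Set X := fun k => convexHull ℝ (z '' Set.Ici k) with hKdef
  have hKmem : ∀ k, z k ∈ K k := fun k => subset_convexHull ℝ _ ⟨k, le_refl k, rfl⟩
  have hKmono : ∀ k m, k ≤ m → K m ⊆ K k := fun k m h =>
    convexHull_mono (Set.image_mono (Set.Ici_subset_Ici.2 h))
  have hKconv : ∀ k, Convex ℝ (K k) := fun k => convex_convexHull ℝ _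
  have hKnorm : ∀ k, ∀ w ∈ K k, ‖w‖ ≤ C := by
    intro k w hw
    have hsub : K k ⊆ Metric.closedBall 0 C := by
      refine convexHull_min ?_ (convex_closedBall 0 C)
      rintro v ⟨n, -, rfl⟩
      simpa [mem_closedBall_zero_iff] using hC n
    simpa [mem_closedBall_zero_iff] using hsub hw
  have hKhalf : ∀ (b : X →L[ℝ] ℝ) (k : ℕ) (q : ℝ), (∀ n, k ≤ n → b (z n) ≤ q) →
      ∀ w ∈ K k, b w ≤ q := by
    intro b k q h w hw
    have hsub : K k ⊆ {v | b v ≤ q} := by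
      refine convexHull_min ?_ (convex_halfSpace_le ⟨b.map_add, b.map_smul⟩ q)
      rintro v ⟨n, hn, rfl⟩
      exact h n hn
    exact hsub hw
  have hK0 : ∀ w ∈ K 0, r ≤ ‖w‖ := by
    intro w hw
    refine hr w ?_
    refine convexHull_mono ?_ hw
    rintro v ⟨n, -, rfl⟩
    exact ⟨n, rfl⟩
  -- the inf-functional and the near-minimizing choice
  set δ : ℕ → ℝ := fun k => ε * (t (k + 1)) ^ 2 with hδdef
  have hδpos : ∀ k, 0 < δ k := fun k => mul_pos hε (pow_pos (ht_pos _) 2)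
  set Θ : ℕ → X → ℝ := fun k v => sInf ((fun w' => S (v + t k • w')) '' K k) with hΘdef
  have hTne : ∀ k (v : X), ((fun w' => S (v + t k • w')) '' K k).Nonempty :=
    fun k v => ⟨_, z k, hKmem k, rfl⟩
  have hTbdd : ∀ k (v : X), BddBelow ((fun w' => S (v + t k • w')) '' K k) := by
    intro k v
    refine ⟨-(‖v‖ + t k * C), ?_⟩
    rintro a ⟨w', hw', rfl⟩
    have h1 : ‖v + t k • w'‖ ≤ ‖v‖ + t k * C := by
      calc ‖v + t k • w'‖ ≤ ‖v‖ + ‖t k • w'‖ := norm_add_le _ _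
      _ = ‖v‖ + t k * ‖w'‖ := by
          rw [norm_smul, Real.norm_eq_abs, abs_of_pos (ht_pos k)]
      _ ≤ ‖v‖ + t k * C := by
          have := hKnorm k w' hw'
          nlinarith [ht_pos k]
    have := hSlow (v + t k • w')
    linarith
  have hpick : ∀ (k : ℕ) (v : X), ∃ w', w' ∈ K k ∧ S (v + t k • w') < Θ k v + δ k := by
    intro k v
    obtain ⟨a, ⟨w', hw', rfl⟩, ha⟩ :=
      exists_lt_of_csInf_lt (hTne k v) (lt_add_of_pos_right (Θ k v) (hδpos k))
    exact ⟨w', hw', ha⟩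
  choose pick hpickK hpickS using hpick
  obtain ⟨y, hy0, hyS⟩ : ∃ y : ℕ → X, y 0 = 0 ∧
      ∀ k, y (k + 1) = y k + t (k + 1) • pick k (y k) :=
    ⟨fun k => Nat.rec 0 (fun k yk => yk + t (k + 1) • pick k yk) k, rfl, fun k => rfl⟩
  set w : ℕ → X := fun k => pick k (y k) with hwdef
  set θ : ℕ → ℝ := fun k => Θ k (y k) with hθdef
  have hwK : ∀ k, w k ∈ K k := fun k => hpickK k (y k)
  have hwS : ∀ k, S (y k + t k • w k) < θ k + δ k := fun k => hpickS k (y k)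
  -- the series
  set f : ℕ → X := fun j => t (j + 1) • w j with hfdef
  have hfnorm : ∀ j, ‖f j‖ ≤ C * 2⁻¹ * (2⁻¹ : ℝ) ^ j := by
    intro j
    have h1 : ‖f j‖ = t (j + 1) * ‖w j‖ := by
      rw [hfdef]; rw [norm_smul, Real.norm_eq_abs, abs_of_pos (ht_pos _)]
    have h2 : ‖w j‖ ≤ C := hKnorm j (w j) (hwK j)
    have h3 : t (j + 1) = 2⁻¹ * (2⁻¹ : ℝ) ^ j := by
      rw [htpow, pow_succ]; ring
    rw [h1, h3]
    nlinarith [pow_pos (show (0:ℝ) < 2⁻¹ by norm_num) j, pow_nonneg (show (0:ℝ) ≤ 2⁻¹ by norm_num) j]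
  have hsummable : Summable f := by
    refine Summable.of_norm_bounded (g := fun j => C * 2⁻¹ * (2⁻¹ : ℝ) ^ j) ?_ hfnorm
    exact (summable_geometric_of_lt_one (by norm_num) (by norm_num)).mul_left _
  set yL : X := ∑' j, f j with hyLdef
  have hyrange : ∀ k, y k = ∑ j ∈ Finset.range k, f j := by
    intro k
    induction k with
    | zero => simp [hy0]
    | succ k ih => rw [Finset.sum_range_succ, ← ih, hyS k]
  have hy_tendsto : Tendsto y atTop (nhds yL) := by
    have := hsummable.hasSum.tendsto_sum_nat
    simpa [← hyrange] using this
  have htail : ∀ k, yL - y k = ∑' j, f (j + k) := by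
    intro k
    have h := Summable.sum_add_tsum_nat_add k hsummable
    rw [hyrange k]
    rw [← hyLdef] at h
    exact sub_eq_of_eq_add' h.symm
  -- geometric partial sums
  have hrangesum : ∀ m, ∑ j ∈ Finset.range m, t (j + 1) = 1 - t m := by
    intro m
    induction m with
    | zero => simp [htpow]
    | succ m ih =>
      rw [Finset.sum_range_succ, ih, ht_succ m]
      ring
  have hIcosum : ∀ k m, k ≤ m → ∑ j ∈ Finset.Ico k m, t (j + 1) = t k - t m := by
    intro k m hkm
    rw [Finset.sum_Ico_eq_sub _ hkm, hrangesum, hrangesum]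
    ring
  have hyIco : ∀ k m, k ≤ m → y m - y k = ∑ j ∈ Finset.Ico k m, f j := by
    intro k m hkm
    rw [hyrange k, hyrange m, Finset.sum_Ico_eq_sub _ hkm]
  -- choose b* attaining the norm of yL
  obtain ⟨bs, hbsB, hbs⟩ := hB2 yL
  -- F4 : θ k ≤ bs yL
  have hF4 : ∀ k, θ k ≤ bs yL := by
    intro k
    rw [hbs]
    have key : ∀ m : ℕ,
        θ k ≤ ‖y k + (t k / (t k - t (k + m + 1))) • (y (k + m + 1) - y k)‖ := by
      intro m
      have hklt : k < k + m + 1 := by omega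
      have hd : 0 < t k - t (k + m + 1) := sub_pos.2 (ht_lt _ _ hklt)
      set d : ℝ := t k - t (k + m + 1) with hddef
      set v : X := d⁻¹ • (y (k + m + 1) - y k) with hvdef
      have hvK : v ∈ K k := by
        have hIco : y (k + m + 1) - y k = ∑ j ∈ Finset.Ico k (k + m + 1), f j :=
          hyIco k _ (le_of_lt hklt)
        have hv2 : v = ∑ j ∈ Finset.Ico k (k + m + 1), (d⁻¹ * t (j + 1)) • w j := by
          rw [hvdef, hIco, Finset.smul_sum]
          refine Finset.sum_congr rfl ?_
          intro j hj
          rw [smul_smul]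
        rw [hv2]
        refine Convex.sum_mem (hKconv k) ?_ ?_ ?_
        · intro j hj
          exact mul_nonneg (inv_nonneg.2 hd.le) (ht_pos _).le
        · rw [← Finset.mul_sum, hIcosum k _ (le_of_lt hklt), ← hddef]
          field_simp
        · intro j hj
          exact hKmono k j (Finset.mem_Ico.1 hj).1 (hwK j)
      have h1 : θ k ≤ S (y k + t k • v) := csInf_le (hTbdd k (y k)) ⟨v, hvK, rfl⟩
      have h2 : y k + t k • v = y k + (t k / d) • (y (k + m + 1) - y k) := by
        rw [hvdef, smul_smul, div_eq_mul_inv]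
      calc θ k ≤ S (y k + t k • v) := h1
      _ ≤ ‖y k + t k • v‖ := hSnorm _
      _ = _ := by rw [h2]
    have ht0 : Tendsto (fun m => t (k + m + 1)) atTop (nhds 0) := by
      have heq : (fun m => t (k + m + 1)) = fun m => (2⁻¹ : ℝ) ^ (k + 1) * (2⁻¹ : ℝ) ^ m := by
        funext m
        rw [htpow, ← pow_add]
        congr 1
        omega
      rw [heq]
      simpa using
        (tendsto_pow_atTop_nhds_zero_of_lt_one (by norm_num : (0:ℝ) ≤ 2⁻¹)
          (by norm_num : (2⁻¹:ℝ) < 1)).const_mul ((2⁻¹ : ℝ) ^ (k + 1))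
    have hmono : Tendsto (fun m : ℕ => k + m + 1) atTop atTop :=
      tendsto_atTop_mono (fun m => by omega : ∀ m : ℕ, m ≤ k + m + 1) tendsto_id
    have hy1 : Tendsto (fun m => y (k + m + 1)) atTop (nhds yL) := hy_tendsto.comp hmono
    have hscal : Tendsto (fun m => t k / (t k - t (k + m + 1))) atTop
        (nhds (t k / (t k - 0))) :=
      tendsto_const_nhds.div (tendsto_const_nhds.sub ht0)
        (by rw [sub_zero]; exact (ht_pos k).ne')
    have hlim : Tendsto
        (fun m => y k + (t k / (t k - t (k + m + 1))) • (y (k + m + 1) - y k)) atTop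
        (nhds (y k + (t k / (t k - 0)) • (yL - y k))) :=
      tendsto_const_nhds.add (hscal.smul (hy1.sub tendsto_const_nhds))
    have hval : y k + (t k / (t k - 0)) • (yL - y k) = yL := by
      rw [sub_zero, div_self (ht_pos k).ne', one_smul, add_sub_cancel]
    rw [hval] at hlim
    exact ge_of_tendsto' ((continuous_norm.tendsto yL).comp hlim) key
  set β : ℕ → ℝ := fun k => bs (yL - y k) with hβdef
  have hβ0 : r ≤ β 0 := by
    have h1 : θ 0 ≤ bs yL := hF4 0
    have h2 : r ≤ θ 0 := by
      refine le_csInf (hTne 0 (y 0)) ?_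
      rintro a ⟨w', hw', rfl⟩
      have h3 : y 0 + t 0 • w' = w' := by
        rw [hy0, htpow]; simp
      show r ≤ S (y 0 + t 0 • w')
      rw [h3]
      obtain ⟨b', hb'B, hb'⟩ := hB2 w'
      calc r ≤ ‖w'‖ := hK0 w' hw'
      _ = b' w' := hb'.symm
      _ ≤ S w' := hSle b' hb'B w'
    have h4 : β 0 = bs yL := by rw [hβdef]; simp [hy0]
    linarith
  have hR2 : ∀ k, β k = t (k + 1) * bs (w k) + β (k + 1) := by
    intro k
    have h1 : yL - y k = t (k + 1) • w k + (yL - y (k + 1)) := by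
      rw [hyS k]; abel
    rw [hβdef]
    simp only []
    rw [h1, map_add, map_smul]
    simp [smul_eq_mul]
  have hR3 : ∀ k, t (k + 1) * bs (w k) - δ k ≤ β (k + 1) := by
    intro k
    have h1 : bs (y k + t k • w k) ≤ θ k + δ k :=
      le_of_lt (lt_of_le_of_lt (hSle bs hbsB _) (hwS k))
    have h2 : θ k ≤ bs yL := hF4 k
    have h3 : bs yL = bs (y k) + t (k + 1) * bs (w k) + β (k + 1) := by
      have : yL = y k + t (k + 1) • w k + (yL - y (k + 1)) := by
        rw [hyS k]; abel
      conv_lhs => rw [this]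
      rw [map_add, map_add, map_smul]
      simp [hβdef, smul_eq_mul]
    have h4 : bs (y k + t k • w k) = bs (y k) + t k * bs (w k) := by
      rw [map_add, map_smul]; simp [smul_eq_mul]
    have h5 : t k = 2 * t (k + 1) := by rw [ht_succ k]; ring
    rw [h4, h5] at h1
    linarith
  have hInv : ∀ k, t k * (r - ε / 2) + ε * (t k * t (k + 1)) ≤ β k := by
    intro k
    induction k with
    | zero =>
      have h1 : t 0 = 1 := by rw [htpow]; norm_num
      have h2 : t 1 = 2⁻¹ := by rw [htpow]; norm_num
      rw [h1, h2]
      linarith [hβ0]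
    | succ k ih =>
      have h1 : 2 * β (k + 1) ≥ β k - δ k := by
        have := hR2 k
        have := hR3 k
        linarith
      have h5 : t k = 2 * t (k + 1) := by rw [ht_succ k]; ring
      have h6 : t (k + 2) = t (k + 1) * 2⁻¹ := ht_succ (k + 1)
      have h7 : δ k = ε * t (k + 1) ^ 2 := rfl
      rw [h5] at ih
      rw [h6]
      nlinarith [ih, h1, h7]
  -- conclusion
  refine ⟨bs, hbsB, ?_⟩
  intro k
  by_contra hcon
  push_neg at hcon
  have hw_le : ∀ j, k ≤ j → bs (w j) ≤ r - ε := by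
    intro j hj
    exact hKhalf bs j (r - ε) (fun n hn => hcon n (le_trans hj hn)) (w j) (hwK j)
  have hβle : β k ≤ (r - ε) * t k := by
    have hsum_tail : Summable (fun j => f (j + k)) := (summable_nat_add_iff k).2 hsummable
    have hmap : HasSum (fun j => bs (f (j + k))) (bs (yL - y k)) := by
      have h0 : HasSum (fun j => f (j + k)) (yL - y k) := by
        rw [htail k]
        exact hsum_tail.hasSum
      exact h0.mapL bs
    have h1 : β k = ∑' j, bs (f (j + k)) := hmap.tsum_eq.symm
    have h3 : ∀ j, bs (f (j + k)) ≤ t (j + k + 1) * (r - ε) := by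
      intro j
      have h2 : bs (f (j + k)) = t (j + k + 1) * bs (w (j + k)) := by
        show bs (t (j + k + 1) • w (j + k)) = _
        rw [map_smul]
        simp [smul_eq_mul]
      rw [h2]
      exact mul_le_mul_of_nonneg_left (hw_le (j + k) (Nat.le_add_left k j)) (ht_pos _).le
    have hsum2 : Summable (fun j => t (j + k + 1) * (r - ε)) := by
      have heq : (fun j => t (j + k + 1) * (r - ε)) =
          fun j => (t (k + 1) * (r - ε)) * (2⁻¹ : ℝ) ^ j := by
        funext j
        rw [htpow, htpow, show j + k + 1 = (k + 1) + j from by omega, pow_add]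
        ring
      rw [heq]
      exact (summable_geometric_of_lt_one (by norm_num) (by norm_num)).mul_left _
    have h4 : ∑' j, (t (j + k + 1) * (r - ε)) = (r - ε) * t k := by
      have heq : (fun j : ℕ => t (j + k + 1) * (r - ε)) =
          fun j => (2⁻¹ : ℝ) ^ j * (t (k + 1) * (r - ε)) := by
        funext j
        rw [htpow, htpow, show j + k + 1 = (k + 1) + j from by omega, pow_add]
        ring
      rw [heq, tsum_mul_right, tsum_geometric_of_lt_one (by norm_num) (by norm_num)]
      have h5 : t k = 2 * t (k + 1) := by rw [ht_succ k]; ring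
      rw [h5]
      norm_num
      ring
    have h6 : ∑' j, bs (f (j + k)) ≤ ∑' j, (t (j + k + 1) * (r - ε)) :=
      Summable.tsum_le_tsum h3 ⟨_, hmap⟩ hsum2
    rw [h1, ← h4]
    exact h6
  have := hInv k
  nlinarith [mul_pos hε (ht_pos k), mul_pos (mul_pos hε (ht_pos k)) (ht_pos (k + 1))]

theorem stmt12 [CompleteSpace X] (B : Set (X →L[ℝ] ℝ)) (hB : IsBoundary B)
    (x : ℕ → X) (hx : BoundedSeq x) (x₀ : X)
    (hBCauchy : ∀ b ∈ B, CauchySeq (fun n => b (x n)))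
    (hwC : WeaklyCauchy x)
    (hBlim : ∀ b ∈ B, Filter.Tendsto (fun n => b (x n)) Filter.atTop (nhds (b x₀))) :
    ∀ f : X →L[ℝ] ℝ, Filter.Tendsto (fun n => f (x n)) Filter.atTop (nhds (f x₀)) := by
  classical
  obtain ⟨C, hC⟩ := hx
  set z : ℕ → X := fun n => x n - x₀ with hzdef
  have hzC : ∀ n, ‖z n‖ ≤ C + ‖x₀‖ := by
    intro n
    calc ‖z n‖ ≤ ‖x n‖ + ‖x₀‖ := norm_sub_le _ _
    _ ≤ C + ‖x₀‖ := by linarith [hC n]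
  have hzB : ∀ b ∈ B, Filter.Tendsto (fun n => b (z n)) Filter.atTop (nhds 0) := by
    intro b hb
    have h1 : Filter.Tendsto (fun n => b (x n) - b x₀) Filter.atTop (nhds (b x₀ - b x₀)) :=
      (hBlim b hb).sub tendsto_const_nhds
    simpa [hzdef, map_sub] using h1
  have main : ∀ g : X →L[ℝ] ℝ, Filter.Tendsto (fun n => g (z n)) Filter.atTop (nhds 0) := by
    intro g
    by_contra hg
    rw [Metric.tendsto_atTop] at hg
    push_neg at hg
    obtain ⟨ε, hε, hfreq⟩ := hg
    have key : ∀ g' : X →L[ℝ] ℝ, (∃ᶠ n in atTop, ε ≤ g' (z n)) → False := by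
      intro g' hfr
      obtain ⟨φ, hφ, hφ2⟩ := Filter.extraction_of_frequently_atTop hfr
      set ζ : ℕ → X := fun n => z (φ n) with hζdef
      have hg'pos : 0 < ‖g'‖ := by
        by_contra hcon
        push_neg at hcon
        have h0 : ‖g'‖ = 0 := le_antisymm hcon (norm_nonneg _)
        have h1 : g' = 0 := norm_eq_zero.mp h0
        have h2 : ε ≤ g' (ζ 0) := hφ2 0
        rw [h1] at h2
        simp at h2
        linarith
      set r : ℝ := ε / ‖g'‖ with hrdef
      have hrpos : 0 < r := div_pos hε hg'pos
      have hhull : ∀ w ∈ convexHull ℝ (Set.range ζ), r ≤ ‖w‖ := by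
        intro w hw
        have h1 : ε ≤ g' w := by
          have hsub : convexHull ℝ (Set.range ζ) ⊆ {v | ε ≤ g' v} := by
            refine convexHull_min ?_ (convex_halfSpace_ge ⟨g'.map_add, g'.map_smul⟩ ε)
            rintro v ⟨n, rfl⟩
            exact hφ2 n
          exact hsub hw
        have h2 : g' w ≤ ‖g'‖ * ‖w‖ := le_trans (le_abs_self _)
          (by rw [← Real.norm_eq_abs]; exact g'.le_opNorm w)
        rw [hrdef, div_le_iff₀ hg'pos]
        linarith [mul_comm ‖g'‖ ‖w‖]
      obtain ⟨b, hbB, hb⟩ := simons_core_s12 B hB ζ (C + ‖x₀‖) (fun n => hzC (φ n)) r (r / 2)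
        (by positivity) hhull
      have hb0 : Filter.Tendsto (fun n => b (ζ n)) Filter.atTop (nhds 0) :=
        (hzB b hbB).comp hφ.tendsto_atTop
      have hev : ∀ᶠ n in atTop, b (ζ n) < r / 2 :=
        hb0.eventually_lt_const (by positivity)
      obtain ⟨N, hN⟩ := Filter.eventually_atTop.1 hev
      obtain ⟨n, hn1, hn2⟩ := hb N
      have := hN n hn1
      have hhalf : r - r / 2 = r / 2 := by ring
      rw [hhalf] at hn2
      linarith
    have hfr1 : ∃ᶠ n in atTop, ε ≤ |g (z n)| := by
      refine Filter.frequently_atTop.2 ?_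
      intro N
      obtain ⟨n, hn1, hn2⟩ := hfreq N
      exact ⟨n, hn1, by simpa [Real.dist_eq] using hn2⟩
    have hfr2 : (∃ᶠ n in atTop, ε ≤ g (z n)) ∨ (∃ᶠ n in atTop, ε ≤ (-g) (z n)) := by
      have h2 : ∃ᶠ n in atTop, (ε ≤ g (z n)) ∨ (ε ≤ -(g (z n))) :=
        hfr1.mono fun n hn => le_abs.mp hn
      simpa [ContinuousLinearMap.neg_apply] using Filter.frequently_or_distrib.mp h2
    obtain hcase | hcase := hfr2
    · exact key g hcase
    · exact key (-g) hcase
  intro f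
  have h1 : Filter.Tendsto (fun n => f (z n) + f x₀) Filter.atTop (nhds (0 + f x₀)) :=
    (main f).add tendsto_const_nhds
  have h2 : (fun n => f (z n) + f x₀) = fun n => f (x n) := by
    funext n
    rw [hzdef]
    simp [map_sub]
  rw [h2, zero_add] at h1
  exact h1
end

section
/- Let B be a boundary for a real Banach space X and suppose a bounded sequence (x_n) in X is weakly Cauchy and B-converges to some x ∈ X. If additionally every subsequence of (x_n) contains no ℓ¹-subsequence, then (x_n) converges weakly to x. (Weak sequential completeness relative to B-limits via Simons' equality.) -/
open Filter Topology

variable {X : Type*} [NormedAddCommGroup X] [NormedSpace ℝ X]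

lemma summable_half_smul [CompleteSpace X] (v : ℕ → X) (M : ℝ) (hM : ∀ j, ‖v j‖ ≤ M) :
    Summable (fun j => ((1/2:ℝ))^(j+1) • v j) := by
  have hg : Summable (fun j : ℕ => ((1/2:ℝ))^(j+1) * M) := by
    have h0 : Summable (fun j : ℕ => ((1/2:ℝ))^j) :=
      summable_geometric_of_lt_one (by norm_num) (by norm_num)
    have h1 : Summable ((fun j : ℕ => ((1/2:ℝ))^j) ∘ (fun j => j + 1)) :=
      h0.comp_injective (fun a b h => by omega)
    simpa using h1.mul_right M
  apply Summable.of_norm_bounded hg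
  intro j
  rw [norm_smul]
  have : ‖((1/2:ℝ))^(j+1)‖ = ((1/2:ℝ))^(j+1) := by
    rw [Real.norm_eq_abs, abs_of_pos (by positivity)]
  rw [this]
  exact mul_le_mul_of_nonneg_left (hM j) (by positivity)

lemma convex_series_mem [CompleteSpace X] {V : Set X} (hVc : IsClosed V) (hVx : Convex ℝ V)
    (v : ℕ → X) (hvV : ∀ j, v j ∈ V) (M : ℝ) (hM : ∀ j, ‖v j‖ ≤ M) :
    (∑' j, ((1/2:ℝ))^(j+1) • v j) ∈ V := by
  have hsum := summable_half_smul v M hM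
  have hgeo : ∀ m : ℕ, ∑ j ∈ Finset.range m, ((1/2:ℝ))^(j+1) = 1 - (1/2)^m := by
    intro m
    induction m with
    | zero => simp
    | succ m ih => rw [Finset.sum_range_succ, ih]; ring
  have hpos : ∀ m : ℕ, (0:ℝ) < 1 - (1/2)^(m+1) := by
    intro m
    have h1 : ((1/2:ℝ))^(m+1) < 1 :=
      pow_lt_one₀ (by norm_num) (by norm_num) (Nat.succ_ne_zero m)
    linarith
  have hmem : ∀ m : ℕ, (1 - (1/2:ℝ)^(m+1))⁻¹ • (∑ j ∈ Finset.range (m+1), ((1/2:ℝ))^(j+1) • v j) ∈ V := by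
    intro m
    rw [Finset.smul_sum]
    have heq : ∀ j ∈ Finset.range (m+1),
        (1 - (1/2:ℝ)^(m+1))⁻¹ • (((1/2:ℝ))^(j+1) • v j)
          = ((1 - (1/2:ℝ)^(m+1))⁻¹ * ((1/2:ℝ))^(j+1)) • v j := by
      intro j _; rw [smul_smul]
    rw [Finset.sum_congr rfl heq]
    apply hVx.sum_mem
    · intro j _
      have := hpos m
      positivity
    · rw [← Finset.mul_sum, hgeo (m+1)]
      exact inv_mul_cancel₀ (hpos m).ne'
    · intro j _; exact hvV j
  have h1 : Tendsto (fun m : ℕ => (∑ j ∈ Finset.range (m+1), ((1/2:ℝ))^(j+1) • v j)) atTop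
      (nhds (∑' j, ((1/2:ℝ))^(j+1) • v j)) :=
    (hsum.hasSum.tendsto_sum_nat).comp (tendsto_add_atTop_nat 1)
  have h2 : Tendsto (fun m : ℕ => (1 - (1/2:ℝ)^(m+1))⁻¹) atTop (nhds 1) := by
    have hp : Tendsto (fun m : ℕ => ((1/2:ℝ))^(m+1)) atTop (nhds 0) :=
      (tendsto_pow_atTop_nhds_zero_of_lt_one (by norm_num) (by norm_num)).comp
        (tendsto_add_atTop_nat 1)
    have := (tendsto_const_nhds (x := (1:ℝ)).sub hp).inv₀ (by norm_num)
    simpa using this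
  have h3 := h2.smul h1
  rw [one_smul] at h3
  exact hVc.mem_of_tendsto h3 (Filter.Eventually.of_forall hmem)

lemma simons_key [CompleteSpace X] (B : Set (X →L[ℝ] ℝ))
    (hB1 : ∀ b ∈ B, ‖b‖ = 1) (hB2 : ∀ z : X, ∃ b ∈ B, b z = ‖z‖)
    (y : ℕ → X) (M : ℝ) (hM : ∀ n, ‖y n‖ ≤ M)
    (hb0 : ∀ b ∈ B, Tendsto (fun n => b (y n)) atTop (nhds 0))
    (f : X →L[ℝ] ℝ) (hf : ‖f‖ ≤ 1) (c : ℝ) (hc : ∀ n, c ≤ f (y n)) : c ≤ 0 := by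
  suffices key : ∀ ε : ℝ, 0 < ε → c ≤ ε by
    by_contra hcon
    push_neg at hcon
    linarith [key (c/2) (by linarith)]
  intro ε hε
  classical
  -- the convex sets
  set W : ℕ → Set X := fun j => closure (convexHull ℝ (y '' Set.Ici j)) with hWdef
  have hWconv : ∀ j, Convex ℝ (W j) := fun j => (convex_convexHull ℝ _).closure
  have hWclosed : ∀ j, IsClosed (W j) := fun j => isClosed_closure
  have hWmem : ∀ j n, j ≤ n → y n ∈ W j := fun j n hn =>
    subset_closure (subset_convexHull ℝ _ ⟨n, hn, rfl⟩)
  have hWmono : ∀ j k, j ≤ k → W k ⊆ W j := by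
    intro j k hjk
    exact closure_mono (convexHull_mono (Set.image_mono (Set.Ici_subset_Ici.2 hjk)))
  have hWne : ∀ j, (W j).Nonempty := fun j => ⟨y j, hWmem j j le_rfl⟩
  have hWsub : ∀ (j : ℕ) (g : X →L[ℝ] ℝ) (t : ℝ), (∀ n, j ≤ n → g (y n) ≤ t) →
      ∀ z ∈ W j, g z ≤ t := by
    intro j g t hgt z hz
    have hconv : Convex ℝ {z : X | g z ≤ t} := by
      intro a ha b hb s s' hs hs' hss
      simp only [Set.mem_setOf_eq, map_add, map_smul, smul_eq_mul] at *
      calc s * g a + s' * g b ≤ s * t + s' * t :=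
            add_le_add (mul_le_mul_of_nonneg_left ha hs) (mul_le_mul_of_nonneg_left hb hs')
        _ = t := by rw [← add_mul, hss, one_mul]
    have hsub : W j ⊆ {z : X | g z ≤ t} :=
      closure_minimal (convexHull_min (by rintro _ ⟨n, hn, rfl⟩; exact hgt n hn) hconv)
        (isClosed_le g.continuous continuous_const)
    exact hsub hz
  have hWnorm : ∀ j, ∀ z ∈ W j, ‖z‖ ≤ M := by
    intro j z hz
    have hsub : W j ⊆ Metric.closedBall 0 M :=
      closure_minimal (convexHull_min
        (by rintro _ ⟨n, hn, rfl⟩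
            simpa [Metric.mem_closedBall, dist_eq_norm] using hM n)
        (convex_closedBall 0 M)) Metric.isClosed_closedBall
    simpa [Metric.mem_closedBall, dist_eq_norm] using hsub hz
  -- the near-minimizing choice
  have hpick : ∀ (a : X) (m : ℕ), ∃ vm, vm ∈ W (m+1) ∧
      ∀ w ∈ W (m+1), ‖a + (1/2:ℝ)^(m+1) • vm‖ ≤ ‖a + (1/2:ℝ)^(m+1) • w‖ + ε * (1/4)^(m+1) := by
    intro a m
    set s : Set ℝ := (fun w => ‖a + (1/2:ℝ)^(m+1) • w‖) '' W (m+1) with hsdef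
    have hsne : s.Nonempty := (hWne (m+1)).image _
    have hsbdd : BddBelow s := ⟨0, by rintro _ ⟨w', _, rfl⟩; exact norm_nonneg _⟩
    obtain ⟨t, ⟨w0, hw0, rfl⟩, hlt⟩ := Real.lt_sInf_add_pos hsne
      (show (0:ℝ) < ε * (1/4)^(m+1) by positivity)
    refine ⟨w0, hw0, fun w hw => ?_⟩
    have h1 : sInf s ≤ ‖a + (1/2:ℝ)^(m+1) • w‖ := csInf_le hsbdd ⟨w, hw, rfl⟩
    linarith [hlt.le]
  choose pick hpickW hpickmin using hpick
  -- the recursive construction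
  let u : ℕ → X := fun m => Nat.rec (motive := fun _ => X) 0
    (fun m um => um + (1/2:ℝ)^(m+1) • pick um m) m
  set v : ℕ → X := fun m => pick (u m) m with hvdef
  have hu0 : u 0 = 0 := rfl
  have husucc : ∀ m, u (m+1) = u m + (1/2:ℝ)^(m+1) • v m := fun m => rfl
  have hvW : ∀ m, v m ∈ W (m+1) := fun m => hpickW (u m) m
  have hvnorm : ∀ m, ‖v m‖ ≤ M := fun m => hWnorm _ _ (hvW m)
  have hmin : ∀ m, ∀ w ∈ W (m+1),
      ‖u (m+1)‖ ≤ ‖u m + (1/2:ℝ)^(m+1) • w‖ + ε * (1/4)^(m+1) := by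
    intro m w hw
    rw [husucc m]
    exact hpickmin (u m) m w hw
  -- the series and tails
  have hsummτ : ∀ m, Summable (fun i => ((1/2:ℝ))^(i+1) • v (i + m)) :=
    fun m => summable_half_smul _ M (fun i => hvnorm _)
  set τ : ℕ → X := fun m => ∑' i, ((1/2:ℝ))^(i+1) • v (i + m) with hτdef
  have hτW : ∀ m, τ m ∈ W (m+1) := by
    intro m
    exact convex_series_mem (hWclosed _) (hWconv _) _
      (fun i => hWmono (m+1) (i+m+1) (by omega) (hvW (i+m))) M (fun i => hvnorm _)
  have hum : ∀ m, u m = ∑ j ∈ Finset.range m, ((1/2:ℝ))^(j+1) • v j := by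
    intro m
    induction m with
    | zero => simp [hu0]
    | succ m ih => rw [Finset.sum_range_succ, husucc m, ih]
  have hU : ∀ m, τ 0 = u m + (1/2:ℝ)^m • τ m := by
    intro m
    have hg : Summable (fun j => ((1/2:ℝ))^(j+1) • v j) := by
      have := hsummτ 0
      simpa using this
    have hgs : HasSum (fun j => ((1/2:ℝ))^(j+1) • v j) (τ 0) := by
      have := hg.hasSum
      simpa [hτdef] using this
    have h1 : HasSum (fun i => ((1/2:ℝ))^(i+m+1) • v (i + m))
        (τ 0 - ∑ j ∈ Finset.range m, ((1/2:ℝ))^(j+1) • v j) := by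
      rw [hasSum_nat_add_iff (f := fun j => ((1/2:ℝ))^(j+1) • v j) m, sub_add_cancel]
      exact hgs
    have h2 : HasSum (fun i => ((1/2:ℝ))^(i+m+1) • v (i + m)) ((1/2:ℝ)^m • τ m) := by
      have h := ((hsummτ m).hasSum.const_smul ((1/2:ℝ)^m))
      have heq : (fun i => ((1/2:ℝ))^m • (((1/2:ℝ))^(i+1) • v (i + m)))
          = fun i => ((1/2:ℝ))^(i+m+1) • v (i + m) := by
        funext i
        rw [smul_smul]
        congr 1
        ring
      rwa [heq] at h
    have h3 := h1.unique h2
    rw [← hum m] at h3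
    rw [← h3]
    abel
  -- the key decrease estimate
  have hstep : ∀ m, ‖u (m+1)‖ ≤ (1/2)*‖u m‖ + (1/2)*‖τ 0‖ + ε*(1/4)^(m+1) := by
    intro m
    have h1 := hmin m (τ m) (hτW m)
    have h2 : u m + ((1/2:ℝ))^(m+1) • τ m
        = (1/2:ℝ) • u m + (1/2:ℝ) • (u m + (1/2:ℝ)^m • τ m) := by
      rw [smul_add, ← add_assoc, smul_smul]
      rw [show ((1/2:ℝ)) * (1/2)^m = (1/2)^(m+1) by ring]
      rw [show ((1/2:ℝ)) • u m + (1/2:ℝ) • u m = ((1/2:ℝ) + (1/2:ℝ)) • u m by rw [add_smul]]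
      norm_num
    rw [h2, ← hU m] at h1
    calc ‖u (m+1)‖ ≤ ‖(1/2:ℝ) • u m + (1/2:ℝ) • τ 0‖ + ε*(1/4)^(m+1) := h1
      _ ≤ ‖(1/2:ℝ) • u m‖ + ‖(1/2:ℝ) • τ 0‖ + ε*(1/4)^(m+1) := by
          linarith [norm_add_le ((1/2:ℝ) • u m) ((1/2:ℝ) • τ 0)]
      _ = (1/2)*‖u m‖ + (1/2)*‖τ 0‖ + ε*(1/4)^(m+1) := by
          rw [norm_smul, norm_smul]
          norm_num
  -- the induction
  have hstar : ∀ m, (1/2:ℝ)^m * (‖τ 0‖ - ε) + ε*(1/4)^m ≤ ‖τ 0‖ - ‖u m‖ := by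
    intro m
    induction m with
    | zero => simp [hu0]
    | succ m ih =>
      have h1 := hstep m
      have h2 : ((1/2:ℝ))^(m+1) = (1/2) * (1/2)^m := by ring
      have h3 : ((1/4:ℝ))^(m+1) = (1/4) * (1/4)^m := by ring
      rw [h2, h3]
      rw [h3] at h1
      linarith
  -- boundary functional for τ 0
  obtain ⟨b, hbB, hbU⟩ := hB2 (τ 0)
  have hb1 : ‖b‖ = 1 := hB1 b hbB
  have hτb : ∀ m, ‖τ 0‖ - ε ≤ b (τ m) := by
    intro m
    have h1 : b (τ 0) = b (u m) + (1/2:ℝ)^m * b (τ m) := by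
      rw [hU m]
      simp [map_add, map_smul]
    have h2 : b (u m) ≤ ‖u m‖ := by
      calc b (u m) ≤ |b (u m)| := le_abs_self _
        _ = ‖b (u m)‖ := (Real.norm_eq_abs _).symm
        _ ≤ ‖b‖ * ‖u m‖ := b.le_opNorm _
        _ = ‖u m‖ := by rw [hb1, one_mul]
    have h3 := hstar m
    have hp : (0:ℝ) < (1/2)^m := by positivity
    have hq : (0:ℝ) ≤ ε*(1/4)^m := by positivity
    have h4 : (1/2:ℝ)^m * (‖τ 0‖ - ε) ≤ (1/2:ℝ)^m * b (τ m) := by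
      have : ‖τ 0‖ = b (u m) + (1/2:ℝ)^m * b (τ m) := by rw [← hbU, h1]
      linarith
    exact le_of_mul_le_mul_left (by linarith [h4]) hp
  -- conclude ‖τ 0‖ ≤ ε
  have hsmall : ∀ δ : ℝ, 0 < δ → ‖τ 0‖ - ε ≤ δ := by
    intro δ hδ
    have hev : ∀ᶠ n in atTop, b (y n) < δ :=
      (hb0 b hbB).eventually_lt_const hδ
    obtain ⟨N, hN⟩ := eventually_atTop.1 hev
    have hτδ : b (τ N) ≤ δ :=
      hWsub (N+1) b δ (fun n hn => (hN n (by omega)).le) (τ N) (hτW N)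
    linarith [hτb N]
  have hUe : ‖τ 0‖ ≤ ε := by
    by_contra h
    push_neg at h
    linarith [hsmall ((‖τ 0‖ - ε)/2) (by linarith)]
  -- conclude c ≤ ε
  have hcU : c ≤ f (τ 0) := by
    have h1 : ∀ n, (1:ℕ) ≤ n → (-f) (y n) ≤ -c := by
      intro n _
      simp only [ContinuousLinearMap.neg_apply, neg_le_neg_iff]
      exact hc n
    have := hWsub 1 (-f) (-c) h1 (τ 0) (hτW 0)
    simp only [ContinuousLinearMap.neg_apply] at this
    linarith
  have hfU : f (τ 0) ≤ ‖τ 0‖ := by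
    calc f (τ 0) ≤ |f (τ 0)| := le_abs_self _
      _ = ‖f (τ 0)‖ := (Real.norm_eq_abs _).symm
      _ ≤ ‖f‖ * ‖τ 0‖ := f.le_opNorm _
      _ ≤ 1 * ‖τ 0‖ := mul_le_mul_of_nonneg_right hf (norm_nonneg _)
      _ = ‖τ 0‖ := one_mul _
  linarith


theorem stmt15 [CompleteSpace X] (B : Set (X →L[ℝ] ℝ)) (hB : IsBoundary B)
    (x : ℕ → X) (hx : BoundedSeq x) (x₀ : X)
    (hwC : WeaklyCauchy x)
    (hBlim : ∀ b ∈ B, Filter.Tendsto (fun n => b (x n)) Filter.atTop (nhds (b x₀)))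
    (hnol1 : ∀ φ : ℕ → ℕ, StrictMono φ → ¬ IsL1Seq (x ∘ φ)) :
    ∀ f : X →L[ℝ] ℝ, Filter.Tendsto (fun n => f (x n)) Filter.atTop (nhds (f x₀)) := by
  intro f
  obtain ⟨C, hC⟩ := hx
  have hyM : ∀ n, ‖x n - x₀‖ ≤ C + ‖x₀‖ := fun n =>
    (norm_sub_le _ _).trans (by linarith [hC n])
  have hb0 : ∀ b ∈ B, Tendsto (fun n => b (x n - x₀)) atTop (nhds 0) := by
    intro b hbB
    have h := (hBlim b hbB).sub_const (b x₀)
    simpa [map_sub] using h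
  have hly : ∀ (g : X →L[ℝ] ℝ) (l : ℝ),
      Tendsto (fun n => g (x n - x₀)) atTop (nhds l) → l ≤ 0 := by
    intro g l hgl
    suffices h : ∀ ε' : ℝ, 0 < ε' → l ≤ ε' by
      by_contra hcon
      push_neg at hcon
      linarith [h (l/2) (by linarith)]
    intro ε' hε'
    have hev : ∀ᶠ n in atTop, l - ε' < g (x n - x₀) :=
      hgl.eventually_const_lt (by linarith)
    obtain ⟨N, hN⟩ := eventually_atTop.1 hev
    set m' : ℝ := max ‖g‖ 1 with hm'def
    have hm' : (0:ℝ) < m' := lt_of_lt_of_le one_pos (le_max_right _ _)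
    set g' : X →L[ℝ] ℝ := m'⁻¹ • g with hg'def
    have hg'n : ‖g'‖ ≤ 1 := by
      have hb1 : ‖g'‖ ≤ ‖m'⁻¹‖ * ‖g‖ := by
        rw [hg'def]
        exact norm_smul_le m'⁻¹ g
      have hb2 : ‖m'⁻¹‖ = m'⁻¹ := by
        rw [Real.norm_eq_abs, abs_of_pos (inv_pos.2 hm')]
      calc ‖g'‖ ≤ ‖m'⁻¹‖ * ‖g‖ := hb1
        _ = m'⁻¹ * ‖g‖ := by rw [hb2]
        _ ≤ m'⁻¹ * m' := mul_le_mul_of_nonneg_left (le_max_left _ _) (inv_pos.2 hm').le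
        _ = 1 := inv_mul_cancel₀ hm'.ne'
    have hbshift : ∀ b ∈ B, Tendsto (fun n : ℕ => b (x (n + N) - x₀)) atTop (nhds 0) := by
      intro b hb
      exact (hb0 b hb).comp (tendsto_add_atTop_nat N)
    have hcg : ∀ n : ℕ, (l - ε') * m'⁻¹ ≤ g' (x (n + N) - x₀) := by
      intro n
      have h1 : l - ε' ≤ g (x (n + N) - x₀) := (hN (n + N) (by omega)).le
      have h2 : g' (x (n + N) - x₀) = m'⁻¹ * g (x (n + N) - x₀) := by
        rw [hg'def]
        simp [ContinuousLinearMap.smul_apply]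
      rw [h2, mul_comm]
      exact mul_le_mul_of_nonneg_left h1 (inv_pos.2 hm').le
    have hkey := simons_key B hB.1 hB.2 (fun n => x (n + N) - x₀) (C + ‖x₀‖)
      (fun n => hyM _) hbshift g' hg'n ((l - ε') * m'⁻¹) hcg
    have hle : l - ε' ≤ 0 := by
      by_contra hcon
      push_neg at hcon
      have := mul_pos hcon (inv_pos.2 hm')
      linarith
    linarith
  obtain ⟨l₀, hl₀⟩ := hwC f
  have h1 : l₀ - f x₀ ≤ 0 := by
    apply hly f
    have := hl₀.sub_const (f x₀)
    simpa [map_sub] using this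
  have h2 : -(l₀ - f x₀) ≤ 0 := by
    apply hly (-f)
    have := (hl₀.sub_const (f x₀)).neg
    simpa [map_sub, neg_sub, sub_eq_neg_add] using this
  have hl : l₀ = f x₀ := by linarith
  rw [← hl]
  exact hl₀
end
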